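/- arXiv:1802.02662 — 6 statements merged into one kernel-verified Lean document; each statement's English description precedes it below -/
import Mathlib

section
/- Let d ≥ 1 and let K : ℝ^d → [0,∞) be a measurable even function such that h ↦ K(h)·min{1,|h|} belongs to L¹(ℝ^d). Let E, F ⊆ ℝ^d be measurable sets of strictly positive Lebesgue measure with |E ∩ F| = 0, and assume E has finite perimeter in ℝ^d. Then L_K(E,F) ≤ max{|E|, Per(E)/2} · ∫_{ℝ^d} K(h)·min{1,|h|} dh. -/
open MeasureTheory Filter Set
open scoped ENNReal Topology NNReal RealInnerProductSpace symmDiff Convolution Pointwise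

noncomputable section

abbrev V (d : ℕ) := EuclideanSpace ℝ (Fin d)

variable {d : ℕ}

/-- Nonlocal interaction for an `ℝ≥0∞`-valued kernel. -/
def LK (K : V d → ℝ≥0∞) (E F : Set (V d)) : ℝ≥0∞ :=
  ∫⁻ x in F, ∫⁻ y in E, K (y - x)

/-- Nonlocal perimeter for an `ℝ≥0∞`-valued kernel. -/
def PerK (K : V d → ℝ≥0∞) (E Ω : Set (V d)) : ℝ≥0∞ :=
  LK K (E ∩ Ω) (Eᶜ ∩ Ω) + LK K (E ∩ Ω) (Eᶜ ∩ Ωᶜ) + LK K (E ∩ Ωᶜ) (Eᶜ ∩ Ω)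

/-- Nonlocal interaction for a real-valued kernel. -/
def LKr (K : V d → ℝ) (E F : Set (V d)) : ℝ≥0∞ :=
  ∫⁻ x in F, ∫⁻ y in E, ENNReal.ofReal (K (y - x))

/-- Nonlocal perimeter for a real-valued kernel. -/
def PerKr (K : V d → ℝ) (E Ω : Set (V d)) : ℝ≥0∞ :=
  LKr K (E ∩ Ω) (Eᶜ ∩ Ω) + LKr K (E ∩ Ω) (Eᶜ ∩ Ωᶜ) + LKr K (E ∩ Ωᶜ) (Eᶜ ∩ Ω)

/-- Local part of the nonlocal energy. -/
def J1 (K : V d → ℝ) (u : V d → ℝ) (Ω : Set (V d)) : ℝ≥0∞ :=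
  ∫⁻ y in Ω, ∫⁻ x in Ω, ENNReal.ofReal (K (y - x) * |u y - u x|)

/-- Nonlocal part of the nonlocal energy. -/
def J2 (K : V d → ℝ) (u : V d → ℝ) (Ω : Set (V d)) : ℝ≥0∞ :=
  ∫⁻ y in Ω, ∫⁻ x in Ωᶜ, ENNReal.ofReal (K (y - x) * |u y - u x|)

/-- Total nonlocal energy. -/
def JK (K : V d → ℝ) (u : V d → ℝ) (Ω : Set (V d)) : ℝ≥0∞ :=
  2⁻¹ * J1 K u Ω + J2 K u Ω

/-- Divergence of a vector field. -/
def divg (φ : V d → V d) (x : V d) : ℝ :=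
  ∑ i, fderiv ℝ φ x (EuclideanSpace.single i 1) i

/-- De Giorgi perimeter of `E` in an open set `A`. -/
def DGPer (E A : Set (V d)) : ℝ≥0∞ :=
  ⨆ (φ : V d → V d) (_ : ContDiff ℝ 1 φ) (_ : HasCompactSupport φ)
    (_ : tsupport φ ⊆ A) (_ : ∀ x, ‖φ x‖ ≤ 1),
    ENNReal.ofReal (∫ x in E, divg φ x)

/-- Total variation of `u` on `A`. -/
def variation (u : V d → ℝ) (A : Set (V d)) : ℝ≥0∞ :=
  ⨆ (φ : V d → V d) (_ : ContDiff ℝ 1 φ) (_ : HasCompactSupport φ)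
    (_ : tsupport φ ⊆ A) (_ : ∀ x, ‖φ x‖ ≤ 1),
    ENNReal.ofReal (∫ x in A, u x * divg φ x)

/-- Mass-preserving rescaling of a kernel. -/
def Keps (K : V d → ℝ) (ε : ℝ) (h : V d) : ℝ := (ε ^ d)⁻¹ * K (ε⁻¹ • h)

/-- `Ω` has Lipschitz boundary: near every boundary point, `Ω` is the subgraph of
a Lipschitz function in a suitable direction. -/
def HasLipschitzBoundary (Ω : Set (V d)) : Prop :=
  ∀ x ∈ frontier Ω, ∃ (U : Set (V d)) (e : V d) (φ : V d → ℝ) (L : ℝ≥0),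
    IsOpen U ∧ x ∈ U ∧ ‖e‖ = 1 ∧ LipschitzWith L φ ∧
    Ω ∩ U = {y ∈ U | ⟪y, e⟫ < φ (y - ⟪y, e⟫ • e)}

/-- The open unit cube. -/
def cube (d : ℕ) : Set (V d) := {x | ∀ i, x i ∈ Ioo (-(1/2) : ℝ) (1/2)}

/-- The lower halfspace. -/
def halfspace (d : ℕ) : Set (V (d + 1)) := {x | x (Fin.last d) < 0}

lemma sum_single_eq (a : V d) : ∑ i, a i • EuclideanSpace.single i (1:ℝ) = a := by
  have := (EuclideanSpace.basisFun (Fin d) ℝ).sum_repr a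
  simpa using this

lemma divg_smul_field {ψ : V d → ℝ} {x : V d} (hψ : DifferentiableAt ℝ ψ x) (a : V d) :
    divg (fun y => ψ y • a) x = fderiv ℝ ψ x a := by
  have hf : fderiv ℝ (fun y => ψ y • a) x = (fderiv ℝ ψ x).smulRight a :=
    fderiv_smul_const hψ a
  have h2 : fderiv ℝ ψ x a = ∑ i, a i * fderiv ℝ ψ x (EuclideanSpace.single i 1) := by
    conv_lhs => rw [← sum_single_eq a, map_sum]
    simp [mul_comm]
  rw [divg, h2]
  refine Finset.sum_congr rfl fun i _ => ?_
  rw [hf]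
  simp [ContinuousLinearMap.smulRight_apply, mul_comm]

lemma integral_divg_le (E : Set (V d)) {θ : V d → ℝ} (hθ : ContDiff ℝ 1 θ)
    (hθc : HasCompactSupport θ) (hθ1 : ∀ x, |θ x| ≤ 1) {u : V d} (hu : ‖u‖ ≤ 1) :
    ENNReal.ofReal (∫ x in E, divg (fun y => θ y • u) x) ≤ DGPer E univ := by
  have hφ : ContDiff ℝ 1 (fun y => θ y • u) := hθ.smul contDiff_const
  have hφc : HasCompactSupport (fun y => θ y • u) := hθc.smul_right
  have hφ1 : ∀ x, ‖θ x • u‖ ≤ 1 := by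
    intro x
    rw [norm_smul]
    calc ‖θ x‖ * ‖u‖ ≤ 1 * 1 := by
          exact mul_le_mul (hθ1 x) hu (norm_nonneg u) zero_le_one
      _ = 1 := one_mul 1
  exact le_iSup_of_le (fun y => θ y • u) <| le_iSup_of_le hφ <| le_iSup_of_le hφc <|
    le_iSup_of_le (subset_univ _) <| le_iSup_of_le hφ1 le_rfl

-- setwise version of the perimeter test estimate, for a single direction
lemma setIntegral_fderiv_le (E : Set (V d)) (hPer : DGPer E univ ≠ ⊤)
    {ψ : V d → ℝ} (hψ : ContDiff ℝ 1 ψ) (hψc : HasCompactSupport ψ) (hψ1 : ∀ x, |ψ x| ≤ 1)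
    (a : V d) :
    ∫ x in E, fderiv ℝ ψ x a ≤ ‖a‖ * (DGPer E univ).toReal := by
  rcases eq_or_ne a 0 with rfl | ha
  · simp [ENNReal.toReal_nonneg]
  set u : V d := ‖a‖⁻¹ • a with hu_def
  have hna : (0:ℝ) < ‖a‖ := norm_pos_iff.2 ha
  have hu : ‖u‖ = 1 := by
    rw [hu_def, norm_smul, norm_inv, norm_norm, inv_mul_cancel₀ hna.ne']
  have key : ENNReal.ofReal (∫ x in E, divg (fun y => ψ y • u) x) ≤ DGPer E univ :=
    integral_divg_le E hψ hψc hψ1 hu.le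
  have hdiv : ∀ x, divg (fun y => ψ y • u) x = fderiv ℝ ψ x u := fun x =>
    divg_smul_field (hψ.differentiable one_ne_zero x) u
  have h2 : ∫ x in E, divg (fun y => ψ y • u) x ≤ (DGPer E univ).toReal := by
    rcases le_or_gt (∫ x in E, divg (fun y => ψ y • u) x) 0 with h | h
    · exact h.trans ENNReal.toReal_nonneg
    · have := ENNReal.toReal_mono hPer key
      rwa [ENNReal.toReal_ofReal h.le] at this
  have hsmul : ∀ x, fderiv ℝ ψ x a = ‖a‖ * fderiv ℝ ψ x u := by
    intro x
    have : a = ‖a‖ • u := by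
      rw [hu_def, smul_smul, mul_inv_cancel₀ hna.ne', one_smul]
    conv_lhs => rw [this]
    rw [ContinuousLinearMap.map_smul]
    simp
  calc ∫ x in E, fderiv ℝ ψ x a = ‖a‖ * ∫ x in E, fderiv ℝ ψ x u := by
        simp_rw [hsmul]; rw [integral_const_mul]
    _ ≤ ‖a‖ * (DGPer E univ).toReal := by
        refine mul_le_mul_of_nonneg_left ?_ hna.le
        calc ∫ x in E, fderiv ℝ ψ x u = ∫ x in E, divg (fun y => ψ y • u) x := by
              simp_rw [hdiv]
          _ ≤ (DGPer E univ).toReal := h2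

lemma key_translate (E : Set (V d)) (hE : MeasurableSet E) (hEfin : volume E < ⊤)
    (hPer : DGPer E univ ≠ ⊤)
    {ψ : V d → ℝ} (hψ : ContDiff ℝ 1 ψ) (hψc : HasCompactSupport ψ) (hψ1 : ∀ x, |ψ x| ≤ 1)
    (a : V d) :
    ∫ x in E, (ψ (x + a) - ψ x) ≤ ‖a‖ * (DGPer E univ).toReal := by
  -- bound on derivative
  obtain ⟨C, hC⟩ : ∃ C, ∀ y, ‖fderiv ℝ ψ y‖ ≤ C :=
    (hψc.fderiv ℝ).exists_bound_of_continuous (hψ.continuous_fderiv one_ne_zero)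
  have hCnn : (0:ℝ) ≤ C := le_trans (norm_nonneg _) (hC 0)
  -- continuity of the integrand
  have hcont : Continuous fun p : V d × ℝ => fderiv ℝ ψ (p.1 + p.2 • a) a := by
    have h1 : Continuous (fderiv ℝ ψ) := hψ.continuous_fderiv one_ne_zero
    exact (ContinuousLinearMap.apply ℝ ℝ a).continuous.comp
      (h1.comp (by fun_prop))
  -- FTC
  have hFTC : ∀ x : V d, ψ (x + a) - ψ x = ∫ t in Ioc (0:ℝ) 1, fderiv ℝ ψ (x + t • a) a := by
    intro x
    have hγ : ∀ t : ℝ, HasDerivAt (fun s : ℝ => x + s • a) a t := fun t => by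
      simpa using ((hasDerivAt_id t).smul_const a).const_add x
    have hg : ∀ t : ℝ, HasDerivAt (fun s => ψ (x + s • a)) (fderiv ℝ ψ (x + t • a) a) t :=
      fun t => (hψ.differentiable one_ne_zero (x + t • a)).hasFDerivAt.comp_hasDerivAt t (hγ t)
    have h2 := intervalIntegral.integral_eq_sub_of_hasDerivAt (f := fun s => ψ (x + s • a))
      (fun t _ => hg t)
      (((hcont.comp (Continuous.prodMk_right x)).intervalIntegrable 0 1))
    rw [intervalIntegral.integral_of_le zero_le_one] at h2
    simpa using h2.symm
  haveI : IsFiniteMeasure (volume.restrict E) :=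
    ⟨by rwa [Measure.restrict_apply_univ]⟩
  haveI : IsFiniteMeasure (volume.restrict (Ioc (0:ℝ) 1)) :=
    ⟨by rw [Measure.restrict_apply_univ]; simp⟩
  -- integrability on the product
  have hint : Integrable (fun p : V d × ℝ => fderiv ℝ ψ (p.1 + p.2 • a) a)
      ((volume.restrict E).prod (volume.restrict (Ioc (0:ℝ) 1))) := by
    refine Integrable.mono' (integrable_const (C * ‖a‖)) hcont.aestronglyMeasurable ?_
    filter_upwards with p
    calc ‖fderiv ℝ ψ (p.1 + p.2 • a) a‖ ≤ ‖fderiv ℝ ψ (p.1 + p.2 • a)‖ * ‖a‖ :=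
          (fderiv ℝ ψ (p.1 + p.2 • a)).le_opNorm a
      _ ≤ C * ‖a‖ := mul_le_mul_of_nonneg_right (hC _) (norm_nonneg a)
  calc ∫ x in E, (ψ (x + a) - ψ x)
      = ∫ x in E, ∫ t in Ioc (0:ℝ) 1, fderiv ℝ ψ (x + t • a) a := by
        exact integral_congr_ae (Eventually.of_forall fun x => hFTC x)
    _ = ∫ t in Ioc (0:ℝ) 1, ∫ x in E, fderiv ℝ ψ (x + t • a) a := by
        exact integral_integral_swap hint
    _ ≤ ∫ t in Ioc (0:ℝ) 1, ‖a‖ * (DGPer E univ).toReal := by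
        refine integral_mono_ae (hint.integral_prod_right) (integrable_const _) ?_
        filter_upwards with t
        -- translate ψ
        have hψt : ContDiff ℝ 1 (fun y => ψ (y + t • a)) :=
          hψ.comp (contDiff_id.add contDiff_const)
        have hψtc : HasCompactSupport (fun y => ψ (y + t • a)) := by
          exact hψc.comp_homeomorph (Homeomorph.addRight (t • a))
        have hψt1 : ∀ x, |ψ (x + t • a)| ≤ 1 := fun x => hψ1 _
        have hder : ∀ x : V d, fderiv ℝ (fun y => ψ (y + t • a)) x a
            = fderiv ℝ ψ (x + t • a) a := by
          intro x
          have h1 : HasFDerivAt (fun y : V d => y + t • a)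
              (ContinuousLinearMap.id ℝ (V d)) x := (hasFDerivAt_id x).add_const _
          have h2 : HasFDerivAt ψ (fderiv ℝ ψ (x + t • a)) (x + t • a) :=
            (hψ.differentiable one_ne_zero _).hasFDerivAt
          have h3 : HasFDerivAt (fun y => ψ (y + t • a))
              ((fderiv ℝ ψ (x + t • a)).comp (ContinuousLinearMap.id ℝ (V d))) x :=
            h2.comp x h1
          rw [h3.fderiv]
          rfl
        calc ∫ x in E, fderiv ℝ ψ (x + t • a) a
            = ∫ x in E, fderiv ℝ (fun y => ψ (y + t • a)) x a := by simp_rw [hder]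
          _ ≤ ‖a‖ * (DGPer E univ).toReal := setIntegral_fderiv_le E hPer hψt hψtc hψt1 a
    _ ≤ ‖a‖ * (DGPer E univ).toReal := by
        rw [setIntegral_const]
        have : (volume.restrict (Ioc (0:ℝ) 1)) univ = 1 := by
          rw [Measure.restrict_apply_univ]; simp
        simp only [Measure.restrict_apply_univ] at *
        have h1 : volume.real (Ioc (0:ℝ) 1) = 1 := by simp
        rw [h1, one_smul]

lemma clamp_close {s t : ℝ} (hs : |s| ≤ 1) : |max (-1) (min 1 t) - s| ≤ |t - s| := by
  obtain ⟨hs1, hs2⟩ := abs_le.1 hs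
  rcases le_total t (-1) with h2 | h2
  · rw [min_eq_right (by linarith), max_eq_left (by linarith)]
    rw [abs_of_nonpos (by linarith), abs_of_nonpos (by linarith)]
    linarith
  · rcases le_total t 1 with h1 | h1
    · rw [min_eq_right h1, max_eq_right h2]
    · rw [min_eq_left h1, max_eq_right (by linarith)]
      rw [abs_of_nonneg (by linarith), abs_of_nonneg (by linarith)]
      linarith

lemma exists_smooth_approx (g : V d → ℝ) (hg : MemLp g 1 (volume : Measure (V d)))
    (hg1 : ∀ x, |g x| ≤ 1) {δ : ℝ} (hδ : 0 < δ) :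
    ∃ ψ : V d → ℝ, ContDiff ℝ 1 ψ ∧ HasCompactSupport ψ ∧ (∀ x, |ψ x| ≤ 1) ∧
      eLpNorm (fun x => ψ x - g x) 1 volume ≤ ENNReal.ofReal δ := by
  obtain ⟨f₀, f₀supp, hf₀, f₀cont, -⟩ :=
    hg.exists_hasCompactSupport_eLpNorm_sub_le ENNReal.one_ne_top
      (ε := ENNReal.ofReal (δ/3)) (ENNReal.ofReal_pos.2 (by linarith)).ne'
  -- clamp f₀
  set u : V d → ℝ := fun x => max (-1) (min 1 (f₀ x)) with hu_def
  have ucont : Continuous u := continuous_const.max (continuous_const.min f₀cont)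
  have usupp : HasCompactSupport u := by
    have : u = (fun t : ℝ => max (-1) (min 1 t)) ∘ f₀ := rfl
    rw [this]
    exact f₀supp.comp_left (by norm_num)
  have u1 : ∀ x, |u x| ≤ 1 := by
    intro x
    rw [abs_le]
    exact ⟨le_max_left _ _, max_le (by norm_num) (min_le_left _ _)⟩
  have h_ug : eLpNorm (fun x => u x - g x) 1 volume ≤ ENNReal.ofReal (δ/3) := by
    refine le_trans (eLpNorm_mono fun x => ?_) hf₀
    simp only [Pi.sub_apply, Real.norm_eq_abs]
    rw [abs_sub_comm (g x) (f₀ x)]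
    exact clamp_close (hg1 x)
  -- compact set containing all supports
  set S : Set (V d) := Metric.closedBall (0 : V d) 1 + tsupport u with hS_def
  have hScomp : IsCompact S := (isCompact_closedBall 0 1).add usupp
  have hSfin : volume S ≠ ⊤ := hScomp.measure_lt_top.ne
  have hSsub : tsupport u ⊆ S := by
    intro x hx
    have : (0 : V d) + x ∈ S := Set.add_mem_add (Metric.mem_closedBall_self zero_le_one) hx
    simpa using this
  set ε' : ℝ := (δ/3) / ((volume S).toReal + 1) with hε'_def
  have hε' : 0 < ε' := by
    apply div_pos (by linarith)
    positivity
  -- uniform continuity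
  obtain ⟨r, hr, hrH⟩ := Metric.uniformContinuous_iff.1
    (usupp.uniformContinuous_of_continuous ucont) ε' hε'
  set r' : ℝ := min r 1 with hr'_def
  have hr'0 : 0 < r' := lt_min hr one_pos
  have hr'1 : r' ≤ 1 := min_le_right _ _
  set φ : ContDiffBump (0 : V d) := ⟨r'/2, r', by positivity, by linarith⟩ with hφ_def
  set ψ₀ : V d → ℝ := (φ.normed volume) ⋆[ContinuousLinearMap.lsmul ℝ ℝ, volume] u with hψ₀_def
  have hψ₀smooth : ContDiff ℝ 1 ψ₀ :=
    HasCompactSupport.contDiff_convolution_left _ φ.hasCompactSupport_normed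
      φ.contDiff_normed (ucont.locallyIntegrable)
  have hψ₀c : HasCompactSupport ψ₀ :=
    HasCompactSupport.convolution (L := ContinuousLinearMap.lsmul ℝ ℝ) (μ := volume) φ.hasCompactSupport_normed usupp
  have h_close : ∀ x, |ψ₀ x - u x| ≤ ε' := by
    intro x
    have := φ.dist_normed_convolution_le (μ := volume) (g := u) ucont.aestronglyMeasurable
      (x₀ := x) (fun y hy => by
        have : dist y x < r := lt_of_lt_of_le (Metric.mem_ball.1 hy) (min_le_left _ _)
        exact (hrH this).le)
    rwa [Real.dist_eq] at this
  have hψ₀supp : Function.support ψ₀ ⊆ S := by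
    refine subset_trans (support_convolution_subset (L := ContinuousLinearMap.lsmul ℝ ℝ) (μ := volume)) ?_
    rw [φ.support_normed_eq]
    exact Set.add_subset_add (Metric.ball_subset_closedBall.trans
      (Metric.closedBall_subset_closedBall hr'1)) (subset_tsupport u)
  -- rescale
  set ψ : V d → ℝ := fun x => (1 + ε')⁻¹ * ψ₀ x with hψ_def
  have hψsmooth : ContDiff ℝ 1 ψ := contDiff_const.mul hψ₀smooth
  have hψc : HasCompactSupport ψ := hψ₀c.mul_left
  have hψ₀bd : ∀ x, |ψ₀ x| ≤ 1 + ε' := by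
    intro x
    calc |ψ₀ x| ≤ |ψ₀ x - u x| + |u x| := by
          have := abs_sub_abs_le_abs_sub (ψ₀ x) (u x); have := abs_add_le (ψ₀ x - u x) (u x)
          calc |ψ₀ x| = |(ψ₀ x - u x) + u x| := by ring_nf
            _ ≤ |ψ₀ x - u x| + |u x| := abs_add_le _ _
      _ ≤ ε' + 1 := add_le_add (h_close x) (u1 x)
      _ = 1 + ε' := by ring
  have hψ1 : ∀ x, |ψ x| ≤ 1 := by
    intro x
    rw [hψ_def]
    rw [abs_mul, abs_of_nonneg (by positivity : (0:ℝ) ≤ (1 + ε')⁻¹)]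
    rw [inv_mul_le_iff₀ (by positivity), mul_one]
    exact hψ₀bd x
  have h_pt : ∀ x, |ψ x - u x| ≤ 2 * ε' := by
    intro x
    have h1 : |ψ x - ψ₀ x| ≤ ε' := by
      rw [hψ_def]
      have : (1 + ε')⁻¹ * ψ₀ x - ψ₀ x = ((1 + ε')⁻¹ - 1) * ψ₀ x := by ring
      rw [this, abs_mul]
      have e1 : |(1 + ε')⁻¹ - 1| = 1 - (1 + ε')⁻¹ := by
        rw [abs_of_nonpos]
        · ring
        · simp only [sub_nonpos]
          rw [inv_le_one_iff₀]
          right; linarith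
      rw [e1]
      calc (1 - (1 + ε')⁻¹) * |ψ₀ x| ≤ (1 - (1 + ε')⁻¹) * (1 + ε') := by
            refine mul_le_mul_of_nonneg_left (hψ₀bd x) ?_
            simp only [sub_nonneg]
            rw [inv_le_one_iff₀]; right; linarith
        _ = ε' := by field_simp; ring
    calc |ψ x - u x| = |(ψ x - ψ₀ x) + (ψ₀ x - u x)| := by ring_nf
      _ ≤ |ψ x - ψ₀ x| + |ψ₀ x - u x| := abs_add_le _ _
      _ ≤ ε' + ε' := add_le_add h1 (h_close x)
      _ = 2 * ε' := by ring
  have h_zero : ∀ x ∉ S, ψ x - u x = 0 := by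
    intro x hx
    have h1 : ψ₀ x = 0 := by
      by_contra h
      exact hx (hψ₀supp h)
    have h2 : u x = 0 := by
      by_contra h
      exact hx (hSsub (subset_tsupport u h))
    rw [hψ_def]; simp [h1, h2]
  -- L¹ bound for ψ - u
  have h_psu : eLpNorm (fun x => ψ x - u x) 1 volume ≤ ENNReal.ofReal (2*δ/3) := by
    rw [eLpNorm_one_eq_lintegral_enorm]
    have hbd : ∀ x, (‖ψ x - u x‖₊ : ℝ≥0∞) ≤ S.indicator (fun _ => ENNReal.ofReal (2*ε')) x := by
      intro x
      by_cases hx : x ∈ S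
      · rw [indicator_of_mem hx]
        rw [← enorm_eq_nnnorm, ← ofReal_norm]
        exact ENNReal.ofReal_le_ofReal (h_pt x)
      · rw [indicator_of_notMem hx, h_zero x hx]
        simp
    calc ∫⁻ x, (‖ψ x - u x‖₊ : ℝ≥0∞) ≤ ∫⁻ x, S.indicator (fun _ => ENNReal.ofReal (2*ε')) x :=
          lintegral_mono hbd
      _ = ENNReal.ofReal (2*ε') * volume S := by
          rw [lintegral_indicator₀ hScomp.isClosed.measurableSet.nullMeasurableSet]
          simp [mul_comm]
      _ ≤ ENNReal.ofReal (2*δ/3) := by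
          rw [← ENNReal.ofReal_toReal hSfin, ← ENNReal.ofReal_mul (by positivity)]
          apply ENNReal.ofReal_le_ofReal
          have hv : (0:ℝ) ≤ (volume S).toReal := ENNReal.toReal_nonneg
          have h1 : ε' * ((volume S).toReal + 1) = δ/3 := by
            rw [hε'_def]; field_simp
          nlinarith [hε'.le]
  -- combine
  refine ⟨ψ, hψsmooth, hψc, hψ1, ?_⟩
  have : (fun x => ψ x - g x) = (fun x => ψ x - u x) + fun x => u x - g x := by
    funext x; simp only [Pi.add_apply]; ring
  rw [this]
  calc eLpNorm ((fun x => ψ x - u x) + fun x => u x - g x) 1 volume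
      ≤ eLpNorm (fun x => ψ x - u x) 1 volume + eLpNorm (fun x => u x - g x) 1 volume :=
        eLpNorm_add_le ((hψsmooth.continuous.sub ucont).aestronglyMeasurable)
          (ucont.aestronglyMeasurable.sub hg.aestronglyMeasurable) le_rfl
    _ ≤ ENNReal.ofReal (2*δ/3) + ENNReal.ofReal (δ/3) := add_le_add h_psu h_ug
    _ = ENNReal.ofReal δ := by
        rw [← ENNReal.ofReal_add (by positivity) (by positivity)]
        congr 1; ring

lemma symmdiff_estimate (E : Set (V d)) (hE : MeasurableSet E) (hEfin : volume E < ⊤)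
    (hPer : DGPer E univ ≠ ⊤) (h : V d) :
    volume ((fun x => x + h) ⁻¹' E \ E) + volume (E \ (fun x => x + h) ⁻¹' E)
      ≤ ENNReal.ofReal ‖h‖ * DGPer E univ := by
  set T : Set (V d) := (fun x => x + h) ⁻¹' E with hT_def
  have hT : MeasurableSet T := hE.preimage (measurable_add_const h)
  have hTvol : volume T = volume E :=
    (measurePreserving_add_right volume h).measure_preimage hE.nullMeasurableSet
  have hTfin : volume T < ⊤ := by rwa [hTvol]
  have hTEfin : volume (T \ E) < ⊤ := lt_of_le_of_lt (measure_mono diff_subset) hTfin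
  have hETfin : volume (E \ T) < ⊤ := lt_of_le_of_lt (measure_mono diff_subset) hEfin
  -- the signed difference of indicators
  set f : V d → ℝ := fun x =>
    T.indicator (fun _ => (1:ℝ)) x - E.indicator (fun _ => (1:ℝ)) x with hf_def
  have hf1 : ∀ x, |f x| ≤ 1 := by
    intro x
    rw [hf_def]
    by_cases hx1 : x ∈ T <;> by_cases hx2 : x ∈ E <;>
      simp [indicator_of_mem, indicator_of_notMem, hx1, hx2]
  have iT : Integrable (T.indicator fun _ => (1:ℝ)) :=
    (integrable_indicator_iff hT).2 (integrableOn_const hTfin.ne)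
  have iE : Integrable (E.indicator fun _ => (1:ℝ)) :=
    (integrable_indicator_iff hE).2 (integrableOn_const hEfin.ne)
  have hfint : Integrable f := iT.sub iE
  have hff : ∀ x, f x * f x
      = (T \ E).indicator (fun _ => (1:ℝ)) x + (E \ T).indicator (fun _ => (1:ℝ)) x := by
    intro x
    rw [hf_def]
    by_cases hx1 : x ∈ T <;> by_cases hx2 : x ∈ E <;>
      simp [indicator_of_mem, indicator_of_notMem, hx1, hx2, Set.mem_diff]
  have iTE : Integrable ((T \ E).indicator fun _ => (1:ℝ)) :=
    (integrable_indicator_iff (hT.diff hE)).2 (integrableOn_const hTEfin.ne)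
  have iET : Integrable ((E \ T).indicator fun _ => (1:ℝ)) :=
    (integrable_indicator_iff (hE.diff hT)).2 (integrableOn_const hETfin.ne)
  have hffint : Integrable (fun x => f x * f x) := by
    have : (fun x => f x * f x) = fun x =>
        (T \ E).indicator (fun _ => (1:ℝ)) x + (E \ T).indicator (fun _ => (1:ℝ)) x := by
      funext x; exact hff x
    rw [this]; exact iTE.add iET
  have hIff : ∫ x, f x * f x = (volume (T \ E)).toReal + (volume (E \ T)).toReal := by
    calc ∫ x, f x * f x
        = ∫ x, ((T \ E).indicator (fun _ => (1:ℝ)) x + (E \ T).indicator (fun _ => (1:ℝ)) x) :=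
          integral_congr_ae (Eventually.of_forall hff)
      _ = (volume (T \ E)).toReal + (volume (E \ T)).toReal := by
          rw [integral_add iTE iET, integral_indicator (hT.diff hE),
            integral_indicator (hE.diff hT)]
          simp [Measure.real]
  -- main real bound
  have main : ∀ δ : ℝ, 0 < δ →
      (volume (T \ E)).toReal + (volume (E \ T)).toReal ≤ ‖h‖ * (DGPer E univ).toReal + δ := by
    intro δ hδ
    obtain ⟨ψ, hψs, hψc, hψ1, hψδ⟩ :=
      exists_smooth_approx f (memLp_one_iff_integrable.2 hfint) hf1 hδ
    have hψcont : Continuous ψ := hψs.continuous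
    have hψint : Integrable ψ := hψcont.integrable_of_hasCompactSupport hψc
    -- ∫ f ψ in translated form
    have hfψint : Integrable (fun x => f x * ψ x) := by
      have : (fun x => f x * ψ x)
          = fun x => T.indicator ψ x - E.indicator ψ x := by
        funext x
        rw [hf_def]
        by_cases hx1 : x ∈ T <;> by_cases hx2 : x ∈ E <;>
          simp [indicator_of_mem, indicator_of_notMem, hx1, hx2]
      rw [this]
      exact (hψint.indicator hT).sub (hψint.indicator hE)
    have hIfψ : ∫ x, f x * ψ x = ∫ x in E, (ψ (x + -h) - ψ x) := by
      have e0 : (fun x => f x * ψ x)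
          = fun x => T.indicator ψ x - E.indicator ψ x := by
        funext x
        rw [hf_def]
        by_cases hx1 : x ∈ T <;> by_cases hx2 : x ∈ E <;>
          simp [indicator_of_mem, indicator_of_notMem, hx1, hx2]
      have e1 : ∫ x, T.indicator ψ x = ∫ x in E, ψ (x + -h) := by
        have W := integral_add_right_eq_self
          (μ := (volume : Measure (V d)))
          (E.indicator (fun y => ψ (y + -h))) h
        have e2 : ∀ x, (E.indicator (fun y => ψ (y + -h))) (x + h) = T.indicator ψ x := by
          intro x
          by_cases hx : x ∈ T
          · rw [indicator_of_mem hx]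
            rw [indicator_of_mem (by exact hx : x + h ∈ E)]
            simp
          · rw [indicator_of_notMem hx, indicator_of_notMem (by exact hx : x + h ∉ E)]
        calc ∫ x, T.indicator ψ x = ∫ x, (E.indicator (fun y => ψ (y + -h))) (x + h) := by
              exact integral_congr_ae (Eventually.of_forall fun x => (e2 x).symm)
          _ = ∫ x, (E.indicator (fun y => ψ (y + -h))) x := W
          _ = ∫ x in E, ψ (x + -h) := integral_indicator hE
      have e3 : ∫ x, E.indicator ψ x = ∫ x in E, ψ x := integral_indicator hE
      have hint1 : Integrable (fun x : V d => ψ (x + -h)) := by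
        have := hψint.comp_add_right (-h)
        exact this
      rw [e0, integral_sub (hψint.indicator hT) (hψint.indicator hE), e1, e3,
        ← integral_sub hint1.integrableOn hψint.integrableOn]
    have hkey : ∫ x, f x * ψ x ≤ ‖h‖ * (DGPer E univ).toReal := by
      rw [hIfψ]
      have := key_translate E hE hEfin hPer hψs hψc hψ1 (-h)
      rwa [norm_neg] at this
    -- error term
    have herr : |∫ x, f x * (ψ x - f x)| ≤ δ := by
      have hb : ‖∫ x, f x * (ψ x - f x)‖
          ≤ (∫⁻ x, ENNReal.ofReal ‖f x * (ψ x - f x)‖).toReal :=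
        norm_integral_le_lintegral_norm _
      have hl : ∫⁻ x, ENNReal.ofReal ‖f x * (ψ x - f x)‖ ≤ ENNReal.ofReal δ := by
        have step1 : ∫⁻ x, ENNReal.ofReal ‖f x * (ψ x - f x)‖
            ≤ ∫⁻ x, ENNReal.ofReal ‖ψ x - f x‖ := by
          refine lintegral_mono fun x => ENNReal.ofReal_le_ofReal ?_
          rw [norm_mul]
          calc ‖f x‖ * ‖ψ x - f x‖ ≤ 1 * ‖ψ x - f x‖ :=
              mul_le_mul_of_nonneg_right (by simpa using hf1 x) (norm_nonneg _)
            _ = ‖ψ x - f x‖ := one_mul _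
        refine step1.trans ?_
        calc ∫⁻ x, ENNReal.ofReal ‖ψ x - f x‖
            = ∫⁻ x, (‖ψ x - f x‖₊ : ℝ≥0∞) := by
              refine lintegral_congr fun x => ?_
              rw [ofReal_norm, enorm_eq_nnnorm]
          _ = eLpNorm (fun x => ψ x - f x) 1 volume := by
              exact (eLpNorm_one_eq_lintegral_enorm (f := fun x => ψ x - f x)).symm
          _ ≤ ENNReal.ofReal δ := hψδ
      rw [← Real.norm_eq_abs]
      refine hb.trans ?_
      calc (∫⁻ x, ENNReal.ofReal ‖f x * (ψ x - f x)‖).toReal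
          ≤ (ENNReal.ofReal δ).toReal := ENNReal.toReal_mono ENNReal.ofReal_ne_top hl
        _ = δ := ENNReal.toReal_ofReal hδ.le
    -- combine
    have hsplit : ∫ x, f x * (ψ x - f x) = (∫ x, f x * ψ x) - ∫ x, f x * f x := by
      have : (fun x => f x * (ψ x - f x)) = fun x => f x * ψ x - f x * f x := by
        funext x; ring
      rw [this, integral_sub hfψint hffint]
    have : ∫ x, f x * f x ≤ (∫ x, f x * ψ x) + δ := by
      have h1 : (∫ x, f x * f x) - (∫ x, f x * ψ x) ≤ δ := by
        have := neg_le_of_abs_le herr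
        rw [hsplit] at this
        linarith
      linarith
    rw [hIff] at this
    linarith [hkey]
  have hreal : (volume (T \ E)).toReal + (volume (E \ T)).toReal
      ≤ ‖h‖ * (DGPer E univ).toReal := le_of_forall_pos_le_add main
  calc volume (T \ E) + volume (E \ T)
      = ENNReal.ofReal ((volume (T \ E)).toReal + (volume (E \ T)).toReal) := by
        rw [ENNReal.ofReal_add ENNReal.toReal_nonneg ENNReal.toReal_nonneg,
          ENNReal.ofReal_toReal hTEfin.ne, ENNReal.ofReal_toReal hETfin.ne]
    _ ≤ ENNReal.ofReal (‖h‖ * (DGPer E univ).toReal) := ENNReal.ofReal_le_ofReal hreal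
    _ = ENNReal.ofReal ‖h‖ * ENNReal.ofReal ((DGPer E univ).toReal) :=
        ENNReal.ofReal_mul (norm_nonneg h)
    _ = ENNReal.ofReal ‖h‖ * DGPer E univ := by rw [ENNReal.ofReal_toReal hPer]

/-- interaction bound via perimeter for disjoint sets. -/
theorem lk_le_of_finite_perimeter {d : ℕ} (hd : 1 ≤ d)
    (K : V d → ℝ) (hKm : Measurable K) (hK0 : ∀ h, 0 ≤ K h) (hKe : ∀ h, K (-h) = K h)
    (hKi : Integrable (fun h : V d => K h * min 1 ‖h‖))
    (E F : Set (V d)) (hE : MeasurableSet E) (hF : MeasurableSet F)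
    (hEpos : 0 < volume E) (hFpos : 0 < volume F)
    (hdisj : volume (E ∩ F) = 0) (hPer : DGPer E univ < ⊤) :
    LKr K E F ≤ max (volume E) (DGPer E univ / 2) *
      ∫⁻ h, ENNReal.ofReal (K h * min 1 ‖h‖) := by
  have hPer' : DGPer E univ ≠ ⊤ := hPer.ne
  set I : ℝ≥0∞ := ∫⁻ h, ENNReal.ofReal (K h * min 1 ‖h‖) with hI_def
  set M : ℝ≥0∞ := max (volume E) (DGPer E univ / 2) with hM_def
  have hmI : Measurable fun h : V d => ENNReal.ofReal (K h * min 1 ‖h‖) :=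
    (hKm.mul (measurable_const.min measurable_norm)).ennreal_ofReal
  by_cases hI0 : I = 0
  · -- kernel vanishes a.e.
    haveI : Nontrivial (V d) := by
      refine ⟨0, EuclideanSpace.single ⟨0, hd⟩ 1, fun hcontra => ?_⟩
      have := congrFun (congrArg (fun v : V d => (v : Fin d → ℝ)) hcontra) ⟨0, hd⟩
      simp [EuclideanSpace.single_apply] at this
    have hae : ∀ᵐ h : V d, ENNReal.ofReal (K h * min 1 ‖h‖) = 0 := by
      have := (lintegral_eq_zero_iff hmI).1 hI0
      filter_upwards [this] with h hh using hh
    have hne : ∀ᵐ h : V d, h ≠ 0 := by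
      have : volume ({0} : Set (V d)) = 0 := measure_singleton 0
      rw [ae_iff]
      simpa [Classical.not_not] using this
    have hK0' : ∀ᵐ h : V d, ENNReal.ofReal (K h) = 0 := by
      filter_upwards [hae, hne] with h h1 h2
      have hmin : 0 < min 1 ‖h‖ := lt_min one_pos (norm_pos_iff.2 h2)
      rw [ENNReal.ofReal_eq_zero] at h1 ⊢
      nlinarith [hK0 h]
    have hint0 : ∫⁻ z : V d, ENNReal.ofReal (K z) = 0 := by
      rw [lintegral_congr_ae hK0']
      exact lintegral_zero
    have : LKr K E F ≤ ∫⁻ _ in F, (0:ℝ≥0∞) := by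
      refine lintegral_mono fun x => ?_
      calc ∫⁻ y in E, ENNReal.ofReal (K (y - x)) ≤ ∫⁻ y, ENNReal.ofReal (K (y - x)) :=
            setLIntegral_le_lintegral E _
        _ = ∫⁻ z, ENNReal.ofReal (K z) :=
            lintegral_sub_right_eq_self (fun z => ENNReal.ofReal (K z)) x
        _ = 0 := hint0
    simpa using this.trans (by simp)
  by_cases hEfin : volume E = ⊤
  · have hMtop : M = ⊤ := by
      rw [hM_def, max_eq_left]
      · exact hEfin
      · rw [hEfin]; exact le_top
    rw [hMtop, ENNReal.top_mul hI0]
    exact le_top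
  replace hEfin : volume E < ⊤ := lt_top_iff_ne_top.2 hEfin
  have hMne : M ≠ ⊤ := by
    rw [hM_def]
    refine (max_lt hEfin ?_).ne
    exact ENNReal.div_lt_top hPer' (by norm_num)
  -- Step 1: rewrite LKr
  set T : V d → Set (V d) := fun h => (fun x => x + h) ⁻¹' E with hT_def
  have hTm : ∀ h, MeasurableSet (T h) := fun h => hE.preimage (measurable_add_const h)
  have hTvol : ∀ h, volume (T h) = volume E := fun h =>
    (measurePreserving_add_right volume h).measure_preimage hE.nullMeasurableSet
  have step1 : LKr K E F = ∫⁻ h, ENNReal.ofReal (K h) * volume (T h ∩ F) := by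
    have inner : ∀ x : V d, ∫⁻ y in E, ENNReal.ofReal (K (y - x))
        = ∫⁻ h, E.indicator (fun _ => (1:ℝ≥0∞)) (x + h) * ENNReal.ofReal (K h) := by
      intro x
      rw [← lintegral_indicator hE]
      rw [← lintegral_add_left_eq_self
        (fun y => E.indicator (fun y => ENNReal.ofReal (K (y - x))) y) x]
      refine lintegral_congr fun h => ?_
      by_cases hy : x + h ∈ E
      · rw [indicator_of_mem hy, indicator_of_mem hy]
        simp
      · rw [indicator_of_notMem hy, indicator_of_notMem hy, zero_mul]
    have swap : LKr K E F
        = ∫⁻ h, ∫⁻ x in F, E.indicator (fun _ => (1:ℝ≥0∞)) (x + h) * ENNReal.ofReal (K h) := by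
      rw [LKr]
      rw [lintegral_congr fun x => inner x]
      exact lintegral_lintegral_swap
        (((measurable_one.indicator hE).comp measurable_add).mul
          ((hKm.comp measurable_snd).ennreal_ofReal)).aemeasurable
    rw [swap]
    refine lintegral_congr fun h => ?_
    have e1 : ∀ x : V d, E.indicator (fun _ => (1:ℝ≥0∞)) (x + h)
        = (T h).indicator (fun _ => (1:ℝ≥0∞)) x := fun x => rfl
    calc ∫⁻ x in F, E.indicator (fun _ => (1:ℝ≥0∞)) (x + h) * ENNReal.ofReal (K h)
        = (∫⁻ x in F, (T h).indicator (fun _ => (1:ℝ≥0∞)) x) * ENNReal.ofReal (K h) := by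
          rw [← lintegral_mul_const' _ _ ENNReal.ofReal_ne_top]
          exact lintegral_congr fun x => by rw [e1 x]
      _ = ENNReal.ofReal (K h) * volume (T h ∩ F) := by
          have : ∫⁻ x in F, (T h).indicator (fun _ => (1:ℝ≥0∞)) x
              = (volume.restrict F) (T h) := by
            have := lintegral_indicator_one (μ := volume.restrict F) (hTm h)
            exact this
          rw [this, Measure.restrict_apply (hTm h), mul_comm]
  -- Step 2: pointwise bound
  have bound : ∀ h : V d, volume (T h ∩ F) ≤ ENNReal.ofReal (min 1 ‖h‖) * M := by
    intro h
    have b1 : volume (T h ∩ F) ≤ volume E := by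
      rw [← hTvol h]
      exact measure_mono inter_subset_left
    have b2 : volume (T h ∩ F) ≤ volume (T h \ E) := by
      have hsub : T h ∩ F ⊆ (T h \ E) ∪ (E ∩ F) := by
        intro x ⟨hx1, hx2⟩
        by_cases hxE : x ∈ E
        · exact Or.inr ⟨hxE, hx2⟩
        · exact Or.inl ⟨hx1, hxE⟩
      calc volume (T h ∩ F) ≤ volume ((T h \ E) ∪ (E ∩ F)) := measure_mono hsub
        _ ≤ volume (T h \ E) + volume (E ∩ F) := measure_union_le _ _
        _ = volume (T h \ E) := by rw [hdisj, add_zero]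
    have b3 : volume (T h \ E) = volume (E \ T h) := by
      have e1 : volume (T h \ E) + volume (T h ∩ E) = volume (T h) :=
        measure_diff_add_inter (T h) hE
      have e2 : volume (E \ T h) + volume (E ∩ T h) = volume E :=
        measure_diff_add_inter E (hTm h)
      rw [inter_comm] at e2
      have hfin : volume (T h ∩ E) ≠ ⊤ := by
        refine (lt_of_le_of_lt (measure_mono inter_subset_right) hEfin).ne
      have : volume (T h \ E) + volume (T h ∩ E) = volume (E \ T h) + volume (T h ∩ E) := by
        rw [e1, e2, hTvol h]
      exact (ENNReal.add_left_inj hfin).1 this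
    have b4 : volume (T h \ E) ≤ ENNReal.ofReal ‖h‖ * (DGPer E univ / 2) := by
      have this2 : volume (T h \ E) + volume (E \ T h) ≤ ENNReal.ofReal ‖h‖ * DGPer E univ :=
        symmdiff_estimate E hE hEfin hPer' h
      rw [← b3, ← two_mul] at this2
      rw [← mul_div_assoc]
      rw [ENNReal.le_div_iff_mul_le (Or.inl two_ne_zero) (Or.inl ENNReal.ofNat_ne_top)]
      rwa [mul_comm] at this2
    rcases le_total 1 ‖h‖ with hcase | hcase
    · rw [min_eq_left hcase]
      simp only [ENNReal.ofReal_one, one_mul]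
      exact b1.trans (le_max_left _ _)
    · rw [min_eq_right hcase]
      refine (b2.trans b4).trans ?_
      exact mul_le_mul_right (le_max_right _ _) _
  calc LKr K E F = ∫⁻ h, ENNReal.ofReal (K h) * volume (T h ∩ F) := step1
    _ ≤ ∫⁻ h, ENNReal.ofReal (K h * min 1 ‖h‖) * M := by
        refine lintegral_mono fun h => ?_
        rw [ENNReal.ofReal_mul (hK0 h), mul_assoc]
        exact mul_le_mul_right (bound h) _
    _ = I * M := lintegral_mul_const' M _ hMne
    _ = M * I := mul_comm _ _

end
end

section
/- Let d ≥ 1, let K : ℝ^d → [0,∞] be a measurable even function, and let Ω ⊆ ℝ^d be a measurable set of strictly positive Lebesgue measure. Then the nonlocal K-perimeter is submodular: for all measurable sets E, F ⊆ ℝ^d, Per_K(E ∩ F, Ω) + Per_K(E ∪ F, Ω) ≤ Per_K(E, Ω) + Per_K(F, Ω) (an inequality in [0,∞]). -/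
open MeasureTheory Filter Set
open scoped ENNReal Topology NNReal RealInnerProductSpace symmDiff

noncomputable section

variable {d : ℕ}

private lemma indicator_one_ne_top (s : Set (V d)) (x : V d) :
    s.indicator (1 : V d → ℝ≥0∞) x ≠ ⊤ := by
  by_cases h : x ∈ s <;> simp [h]

private lemma LK_eq (K : V d → ℝ≥0∞) (A B : Set (V d)) (hA : MeasurableSet A)
    (hB : MeasurableSet B) :
    LK K A B = ∫⁻ x, ∫⁻ y, B.indicator 1 x * (A.indicator 1 y * K (y - x)) := by
  have h1 : ∀ x : V d, (∫⁻ y in A, K (y - x)) = ∫⁻ y, A.indicator 1 y * K (y - x) := by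
    intro x
    rw [← lintegral_indicator hA]
    congr 1; funext y
    by_cases hy : y ∈ A <;> simp [hy]
  rw [LK, ← lintegral_indicator hB]
  congr 1; funext x
  rw [lintegral_const_mul' _ _ (indicator_one_ne_top B x), ← h1 x]
  by_cases hx : x ∈ B <;> simp [hx]

private lemma perK_eq (K : V d → ℝ≥0∞) (hKm : Measurable K) (Ω : Set (V d))
    (hΩ : MeasurableSet Ω) (E : Set (V d)) (hE : MeasurableSet E) :
    PerK K E Ω = ∫⁻ x, ∫⁻ y,
      Eᶜ.indicator 1 x * E.indicator 1 y *
        ((Ω.indicator 1 y + Ω.indicator 1 x * Ωᶜ.indicator 1 y) * K (y - x)) := by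
  have mK : Measurable fun p : V d × V d => K (p.2 - p.1) :=
    hKm.comp (measurable_snd.sub measurable_fst)
  have mf : ∀ (A B : Set (V d)), MeasurableSet A → MeasurableSet B →
      Measurable fun p : V d × V d => B.indicator 1 p.1 * (A.indicator 1 p.2 * K (p.2 - p.1)) :=
    fun A B hA hB =>
      (((measurable_one.indicator hB).comp measurable_fst).mul
        (((measurable_one.indicator hA).comp measurable_snd).mul mK))
  have mf1 := mf _ _ (hE.inter hΩ) (hE.compl.inter hΩ)
  have mf2 := mf _ _ (hE.inter hΩ) (hE.compl.inter hΩ.compl)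
  rw [PerK, LK_eq K _ _ (hE.inter hΩ) (hE.compl.inter hΩ),
      LK_eq K _ _ (hE.inter hΩ) (hE.compl.inter hΩ.compl),
      LK_eq K _ _ (hE.inter hΩ.compl) (hE.compl.inter hΩ),
      ← lintegral_add_left mf1.lintegral_prod_right',
      ← lintegral_add_left (f := fun a => _ + _) (mf1.lintegral_prod_right'.add mf2.lintegral_prod_right')]
  congr 1; funext x
  have my : ∀ (A B : Set (V d)), MeasurableSet A →
      Measurable fun y : V d => B.indicator (1 : V d → ℝ≥0∞) x * (A.indicator 1 y * K (y - x)) :=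
    fun A B hA => measurable_const.mul ((measurable_one.indicator hA).mul
      (hKm.comp (measurable_id.sub measurable_const)))
  have my1 := my _ (Eᶜ ∩ Ω) (hE.inter hΩ)
  have my2 := my _ (Eᶜ ∩ Ωᶜ) (hE.inter hΩ)
  rw [← lintegral_add_left my1, ← lintegral_add_left (f := fun a => _ + _) (my1.add my2)]
  congr 1; funext y
  by_cases hxE : x ∈ E <;> by_cases hyE : y ∈ E <;> by_cases hxΩ : x ∈ Ω <;>
    by_cases hyΩ : y ∈ Ω <;>
    simp [Set.indicator_apply, hxE, hyE, hxΩ, hyΩ]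

/-- the nonlocal perimeter is submodular. -/
theorem perK_submodular {d : ℕ} (hd : 1 ≤ d)
    (K : V d → ℝ≥0∞) (hKm : Measurable K) (hKe : ∀ h, K (-h) = K h)
    (Ω : Set (V d)) (hΩ : MeasurableSet Ω) (hΩpos : 0 < volume Ω)
    (E F : Set (V d)) (hE : MeasurableSet E) (hF : MeasurableSet F) :
    PerK K (E ∩ F) Ω + PerK K (E ∪ F) Ω ≤ PerK K E Ω + PerK K F Ω := by
  have mK : Measurable fun p : V d × V d => K (p.2 - p.1) :=
    hKm.comp (measurable_snd.sub measurable_fst)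
  set w : V d → V d → ℝ≥0∞ := fun x y =>
    (Ω.indicator 1 y + Ω.indicator 1 x * Ωᶜ.indicator 1 y) * K (y - x) with hw
  have mg : ∀ (S : Set (V d)), MeasurableSet S →
      Measurable fun p : V d × V d => Sᶜ.indicator 1 p.1 * S.indicator 1 p.2 * w p.1 p.2 := by
    intro S hS
    exact (((measurable_one.indicator hS.compl).comp measurable_fst).mul
      ((measurable_one.indicator hS).comp measurable_snd)).mul
      (((((measurable_one.indicator hΩ).comp measurable_snd)).add
        (((measurable_one.indicator hΩ).comp measurable_fst).mul
          ((measurable_one.indicator hΩ.compl).comp measurable_snd))).mul mK)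
  have myS : ∀ (S : Set (V d)) (x : V d), MeasurableSet S →
      Measurable fun y : V d => Sᶜ.indicator (1 : V d → ℝ≥0∞) x * S.indicator 1 y * w x y := by
    intro S x hS
    exact (measurable_const.mul (measurable_one.indicator hS)).mul
      ((((measurable_one.indicator hΩ).add
        (measurable_const.mul (measurable_one.indicator hΩ.compl)))).mul
        (hKm.comp (measurable_id.sub measurable_const)))
  rw [perK_eq K hKm Ω hΩ (E ∩ F) (hE.inter hF), perK_eq K hKm Ω hΩ (E ∪ F) (hE.union hF),
      perK_eq K hKm Ω hΩ E hE, perK_eq K hKm Ω hΩ F hF,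
      ← lintegral_add_left (mg _ (hE.inter hF)).lintegral_prod_right',
      ← lintegral_add_left (mg _ hE).lintegral_prod_right']
  refine lintegral_mono fun x => ?_
  rw [← lintegral_add_left (myS _ x (hE.inter hF)), ← lintegral_add_left (myS _ x hE)]
  refine lintegral_mono fun y => ?_
  by_cases hxE : x ∈ E <;> by_cases hyE : y ∈ E <;> by_cases hxF : x ∈ F <;>
    by_cases hyF : y ∈ F <;>
    simp [w, Set.indicator_apply, hxE, hyE, hxF, hyF, le_add_self, le_self_add, add_le_add]


end
end

section
/- Let d ≥ 1, let K : ℝ^d → [0,∞] be a measurable even function, and let Ω ⊆ ℝ^d be measurable with |Ω| > 0. Then Per_K(·,Ω) is lower semicontinuous with respect to L¹_loc(ℝ^d)-convergence of sets: if E_n, E ⊆ ℝ^d are measurable and |(E_n △ E) ∩ C| → 0 for every compact C ⊆ ℝ^d, then Per_K(E,Ω) ≤ liminf_{n→∞} Per_K(E_n,Ω). -/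
open MeasureTheory Filter Set
open scoped ENNReal Topology NNReal RealInnerProductSpace symmDiff

noncomputable section

variable {d : ℕ}

/-! ### Auxiliary material for lower semicontinuity -/

/-- The combined integrand for the nonlocal perimeter. -/
def Wfun (K : V d → ℝ≥0∞) (Ω E : Set (V d)) (x y : V d) : ℝ≥0∞ :=
  (Eᶜ ∩ Ω).indicator 1 x * ((E ∩ Ω).indicator 1 y * K (y - x)) +
    (Eᶜ ∩ Ωᶜ).indicator 1 x * ((E ∩ Ω).indicator 1 y * K (y - x)) +
    (Eᶜ ∩ Ω).indicator 1 x * ((E ∩ Ωᶜ).indicator 1 y * K (y - x))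

lemma lk_eq_aux {K : V d → ℝ≥0∞} {A B : Set (V d)} (hA : MeasurableSet A)
    (hB : MeasurableSet B) :
    LK K A B = ∫⁻ x, ∫⁻ y, B.indicator 1 x * (A.indicator 1 y * K (y - x)) := by
  unfold LK
  rw [← lintegral_indicator hB]
  refine lintegral_congr fun x => ?_
  by_cases hx : x ∈ B
  · rw [Set.indicator_of_mem hx, ← lintegral_indicator hA]
    refine lintegral_congr fun y => ?_
    by_cases hy : y ∈ A <;>
      simp [Set.indicator_of_mem, Set.indicator_of_notMem, hx, hy]
  · simp [Set.indicator_of_notMem hx]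

lemma wfun_meas {K : V d → ℝ≥0∞} (hK : Measurable K) {Ω S : Set (V d)}
    (hΩ : MeasurableSet Ω) (hS : MeasurableSet S) :
    Measurable fun p : V d × V d => Wfun K Ω S p.1 p.2 := by
  have hsub : Measurable fun p : V d × V d => K (p.2 - p.1) :=
    hK.comp (measurable_snd.sub measurable_fst)
  have ind : ∀ {T : Set (V d)}, MeasurableSet T →
      Measurable (T.indicator (1 : V d → ℝ≥0∞)) :=
    fun hT => measurable_one.indicator hT
  unfold Wfun
  exact ((((ind (hS.compl.inter hΩ)).comp measurable_fst).mul
      (((ind (hS.inter hΩ)).comp measurable_snd).mul hsub)).add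
    ((((ind (hS.compl.inter hΩ.compl)).comp measurable_fst).mul
      (((ind (hS.inter hΩ)).comp measurable_snd).mul hsub)))).add
    ((((ind (hS.compl.inter hΩ)).comp measurable_fst).mul
      (((ind (hS.inter hΩ.compl)).comp measurable_snd).mul hsub)))

lemma wfun_meas_slice {K : V d → ℝ≥0∞} (hK : Measurable K) {Ω S : Set (V d)}
    (hΩ : MeasurableSet Ω) (hS : MeasurableSet S) (x : V d) :
    Measurable fun y => Wfun K Ω S x y :=
  (wfun_meas hK hΩ hS).comp (measurable_const.prodMk measurable_id)

lemma perK_eq_wfun {K : V d → ℝ≥0∞} (hK : Measurable K) {Ω E : Set (V d)}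
    (hΩ : MeasurableSet Ω) (hE : MeasurableSet E) :
    PerK K E Ω = ∫⁻ x, ∫⁻ y, Wfun K Ω E x y := by
  have hsub : Measurable fun p : V d × V d => K (p.2 - p.1) :=
    hK.comp (measurable_snd.sub measurable_fst)
  have ind : ∀ {T : Set (V d)}, MeasurableSet T →
      Measurable (T.indicator (1 : V d → ℝ≥0∞)) :=
    fun hT => measurable_one.indicator hT
  have M1 : Measurable fun p : V d × V d =>
      (Eᶜ ∩ Ω).indicator 1 p.1 * ((E ∩ Ω).indicator 1 p.2 * K (p.2 - p.1)) :=
    (((ind (hE.compl.inter hΩ)).comp measurable_fst).mul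
      (((ind (hE.inter hΩ)).comp measurable_snd).mul hsub))
  have M2 : Measurable fun p : V d × V d =>
      (Eᶜ ∩ Ωᶜ).indicator 1 p.1 * ((E ∩ Ω).indicator 1 p.2 * K (p.2 - p.1)) :=
    (((ind (hE.compl.inter hΩ.compl)).comp measurable_fst).mul
      (((ind (hE.inter hΩ)).comp measurable_snd).mul hsub))
  have M3 : Measurable fun p : V d × V d =>
      (Eᶜ ∩ Ω).indicator 1 p.1 * ((E ∩ Ωᶜ).indicator 1 p.2 * K (p.2 - p.1)) :=
    (((ind (hE.compl.inter hΩ)).comp measurable_fst).mul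
      (((ind (hE.inter hΩ.compl)).comp measurable_snd).mul hsub))
  have I1 := M1.lintegral_prod_right' (ν := volume)
  have I2 := M2.lintegral_prod_right' (ν := volume)
  have I3 := M3.lintegral_prod_right' (ν := volume)
  rw [PerK, lk_eq_aux (hE.inter hΩ) (hE.compl.inter hΩ),
    lk_eq_aux (hE.inter hΩ) (hE.compl.inter hΩ.compl),
    lk_eq_aux (hE.inter hΩ.compl) (hE.compl.inter hΩ),
    ← lintegral_add_left I1, ← lintegral_add_left (f := fun x => _ + _) (I1.add I2)]
  refine lintegral_congr fun x => ?_
  have S1 : Measurable fun y =>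
      (Eᶜ ∩ Ω).indicator (1 : V d → ℝ≥0∞) x * ((E ∩ Ω).indicator 1 y * K (y - x)) :=
    M1.comp (measurable_const.prodMk measurable_id)
  have S2 : Measurable fun y =>
      (Eᶜ ∩ Ωᶜ).indicator (1 : V d → ℝ≥0∞) x * ((E ∩ Ω).indicator 1 y * K (y - x)) :=
    M2.comp (measurable_const.prodMk measurable_id)
  rw [← lintegral_add_left S1, ← lintegral_add_left (f := fun x => _ + _) (S1.add S2)]
  rfl

/-- If real indicators converge at a point, memberships eventually agree. -/
lemma eventually_mem_iff {E : Set (V d)} {F : ℕ → Set (V d)} {z : V d}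
    (hz : Tendsto (fun k => (F k).indicator (1 : V d → ℝ) z) atTop
      (𝓝 (E.indicator 1 z))) :
    ∀ᶠ k in atTop, (z ∈ F k ↔ z ∈ E) := by
  have h2 := (Metric.tendsto_nhds.mp hz) (1 / 2) (by norm_num)
  filter_upwards [h2] with k hk
  by_cases hzE : z ∈ E <;> by_cases hzF : z ∈ F k
  · exact iff_of_true hzF hzE
  · exfalso
    rw [Set.indicator_of_notMem hzF, Set.indicator_of_mem hzE, Real.dist_eq] at hk
    norm_num at hk
  · exfalso
    rw [Set.indicator_of_mem hzF, Set.indicator_of_notMem hzE, Real.dist_eq] at hk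
    norm_num at hk
  · exact iff_of_false hzF hzE

/-- Fatou-type lower semicontinuity along an a.e. convergent sequence of sets. -/
lemma perK_le_liminf_of_ae {K : V d → ℝ≥0∞} (hK : Measurable K) {Ω E : Set (V d)}
    (hΩ : MeasurableSet Ω) (hE : MeasurableSet E) (F : ℕ → Set (V d))
    (hF : ∀ k, MeasurableSet (F k))
    (hae : ∀ᵐ x ∂(volume : Measure (V d)),
      Tendsto (fun k => (F k).indicator (1 : V d → ℝ) x) atTop (𝓝 (E.indicator 1 x))) :
    PerK K E Ω ≤ liminf (fun k => PerK K (F k) Ω) atTop := by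
  have key : ∀ x y : V d,
      (∀ᶠ k in atTop, (x ∈ F k ↔ x ∈ E)) → (∀ᶠ k in atTop, (y ∈ F k ↔ y ∈ E)) →
      Wfun K Ω E x y ≤ liminf (fun k => Wfun K Ω (F k) x y) atTop := by
    intro x y hx hy
    have hev : ∀ᶠ k in atTop, Wfun K Ω (F k) x y = Wfun K Ω E x y := by
      filter_upwards [hx, hy] with k hkx hky
      unfold Wfun
      by_cases h1 : x ∈ E <;> by_cases h2 : x ∈ Ω <;> by_cases h3 : y ∈ E <;>
        by_cases h4 : y ∈ Ω <;>
        simp [Set.indicator_apply, Set.mem_inter_iff, Set.mem_compl_iff,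
          hkx, hky, h1, h2, h3, h4]
    exact ge_of_eq ((liminf_congr hev).trans (liminf_const (Wfun K Ω E x y)))
  calc PerK K E Ω = ∫⁻ x, ∫⁻ y, Wfun K Ω E x y := perK_eq_wfun hK hΩ hE
    _ ≤ liminf (fun k => ∫⁻ x, ∫⁻ y, Wfun K Ω (F k) x y) atTop := by
        refine le_trans (lintegral_mono_ae ?_)
          (lintegral_liminf_le fun k => (wfun_meas hK hΩ (hF k)).lintegral_prod_right')
        filter_upwards [hae] with x hx
        refine le_trans (lintegral_mono_ae ?_)
          (lintegral_liminf_le fun k => wfun_meas_slice hK hΩ (hF k) x)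
        filter_upwards [hae] with y hy
        exact key x y (eventually_mem_iff hx) (eventually_mem_iff hy)
    _ = liminf (fun k => PerK K (F k) Ω) atTop :=
        liminf_congr (Eventually.of_forall fun k => (perK_eq_wfun hK hΩ (hF k)).symm)

/-- From local `L¹` convergence of sets, extract a subsequence whose indicators
converge almost everywhere. -/
lemma exists_subseq_indicator_tendsto_ae {E : Set (V d)} (hE : MeasurableSet E)
    (G : ℕ → Set (V d)) (hG : ∀ n, MeasurableSet (G n))
    (hconv : ∀ C : Set (V d), IsCompact C →
      Tendsto (fun n => volume ((G n ∆ E) ∩ C)) atTop (𝓝 0)) :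
    ∃ τ : ℕ → ℕ, StrictMono τ ∧ ∀ᵐ x ∂(volume : Measure (V d)),
      Tendsto (fun k => (G (τ k)).indicator (1 : V d → ℝ) x) atTop
        (𝓝 (E.indicator 1 x)) := by
  obtain ⟨g, gpos, gmeas, gint⟩ :=
    exists_pos_lintegral_lt_of_sigmaFinite (volume : Measure (V d)) one_ne_zero
  set ρ : V d → ℝ≥0∞ := fun x => min (g x : ℝ≥0∞) 1 with hρ
  have ρmeas : Measurable ρ := gmeas.coe_nnreal_ennreal.min measurable_const
  have ρle : ∀ x, ρ x ≤ 1 := fun x => min_le_right _ _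
  have ρpos : ∀ x, ρ x ≠ 0 := fun x => by
    have : (0 : ℝ≥0∞) < min (g x : ℝ≥0∞) 1 :=
      lt_min (by exact_mod_cast gpos x) zero_lt_one
    exact this.ne'
  set ν : Measure (V d) := volume.withDensity ρ with hν
  have hν_fin : IsFiniteMeasure ν :=
    isFiniteMeasure_withDensity
      (((lintegral_mono fun x => min_le_left _ _).trans_lt
        (gint.trans_le le_top)).ne)
  have hν_le : ∀ {s : Set (V d)}, MeasurableSet s → ν s ≤ volume s := by
    intro s hs
    rw [hν, withDensity_apply _ hs]
    calc ∫⁻ x in s, ρ x ≤ ∫⁻ _ in s, 1 := lintegral_mono fun x => ρle x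
      _ = volume s := setLIntegral_one s
  -- tail estimate
  have htail : Tendsto (fun n : ℕ => ν ((Metric.closedBall (0 : V d) n)ᶜ)) atTop
      (𝓝 0) := by
    have h0 : (⋂ n : ℕ, (Metric.closedBall (0 : V d) n)ᶜ) = ∅ := by
      ext x
      simp only [Set.mem_iInter, Set.mem_compl_iff, Metric.mem_closedBall,
        Set.mem_empty_iff_false, iff_false, not_forall, not_not]
      exact ⟨⌈dist x 0⌉₊, Nat.le_ceil _⟩
    have hmono : Antitone fun n : ℕ => (Metric.closedBall (0 : V d) n)ᶜ := by
      intro m n hmn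
      exact Set.compl_subset_compl.mpr
        (Metric.closedBall_subset_closedBall (by exact_mod_cast hmn))
    have := tendsto_measure_iInter_atTop (μ := ν)
      (fun n => measurableSet_closedBall.compl.nullMeasurableSet)
      hmono ⟨0, measure_ne_top ν _⟩
    rw [h0] at this
    simpa [Function.comp_def] using this
  -- convergence of ν-measure of symmetric differences
  have hν0 : Tendsto (fun n => ν (G n ∆ E)) atTop (𝓝 0) := by
    rw [ENNReal.tendsto_atTop_zero]
    intro ε hε
    obtain ⟨R, hR⟩ := ENNReal.tendsto_atTop_zero.mp htail (ε / 2)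
      (ENNReal.half_pos hε.ne')
    obtain ⟨N, hN⟩ := ENNReal.tendsto_atTop_zero.mp
      (hconv (Metric.closedBall (0 : V d) R) (isCompact_closedBall _ _)) (ε / 2)
      (ENNReal.half_pos hε.ne')
    refine ⟨N, fun n hn => ?_⟩
    have hmS : MeasurableSet (G n ∆ E) := (hG n).symmDiff hE
    calc ν (G n ∆ E)
        ≤ ν ((G n ∆ E) ∩ Metric.closedBall (0 : V d) R)
            + ν ((G n ∆ E) \ Metric.closedBall (0 : V d) R) :=
          measure_le_inter_add_diff ν _ _
      _ ≤ volume ((G n ∆ E) ∩ Metric.closedBall (0 : V d) R)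
            + ν ((Metric.closedBall (0 : V d) R)ᶜ) :=
          add_le_add (hν_le (hmS.inter measurableSet_closedBall))
            (measure_mono (Set.diff_subset_compl _ _))
      _ ≤ ε / 2 + ε / 2 := add_le_add (hN n hn) (hR R le_rfl)
      _ = ε := ENNReal.add_halves ε
  -- convergence in measure w.r.t. ν
  have htim : TendstoInMeasure ν (fun n => (G n).indicator (1 : V d → ℝ)) atTop
      (E.indicator 1) := by
    intro ε hε
    have hsub : ∀ n, {x | ε ≤ edist ((G n).indicator (1 : V d → ℝ) x)
        (E.indicator 1 x)} ⊆ G n ∆ E := by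
      intro n x hx
      by_contra hxs
      have hmem : x ∈ G n ↔ x ∈ E := by
        rw [Set.mem_symmDiff] at hxs
        push_neg at hxs
        exact ⟨fun h => hxs.1 h, fun h => hxs.2 h⟩
      have heq : (G n).indicator (1 : V d → ℝ) x = E.indicator 1 x := by
        by_cases h : x ∈ E <;>
          simp [Set.indicator_apply, hmem, h]
      rw [Set.mem_setOf_eq, heq, edist_self] at hx
      exact absurd hx (not_le.mpr hε)
    exact tendsto_of_tendsto_of_tendsto_of_le_of_le tendsto_const_nhds hν0
      (fun n => zero_le) (fun n => measure_mono (hsub n))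
  obtain ⟨τ, hτ, haeν⟩ := htim.exists_seq_tendsto_ae
  refine ⟨τ, hτ, ?_⟩
  have habs : (volume : Measure (V d)) ≪ ν :=
    withDensity_absolutelyContinuous' ρmeas.aemeasurable
      (Eventually.of_forall ρpos)
  exact habs.ae_le haeν

/-- lower semicontinuity of the nonlocal perimeter w.r.t.
`L¹_loc`-convergence of sets. -/
theorem perK_lowerSemicontinuous {d : ℕ} (hd : 1 ≤ d)
    (K : V d → ℝ≥0∞) (hKm : Measurable K) (hKe : ∀ h, K (-h) = K h)
    (Ω : Set (V d)) (hΩ : MeasurableSet Ω) (hΩpos : 0 < volume Ω)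
    (E : Set (V d)) (En : ℕ → Set (V d))
    (hE : MeasurableSet E) (hEn : ∀ n, MeasurableSet (En n))
    (hconv : ∀ C : Set (V d), IsCompact C →
      Tendsto (fun n => volume ((En n ∆ E) ∩ C)) atTop (𝓝 0)) :
    PerK K E Ω ≤ liminf (fun n => PerK K (En n) Ω) atTop := by
  by_contra hcon
  push_neg at hcon
  obtain ⟨c, hc1, hc2⟩ := exists_between hcon
  have hfreq : ∃ᶠ n in atTop, PerK K (En n) Ω < c :=
    frequently_lt_of_liminf_lt (by isBoundedDefault) hc1
  obtain ⟨σ, hσmono, hσ⟩ := extraction_of_frequently_atTop hfreq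
  have hconv' : ∀ C : Set (V d), IsCompact C →
      Tendsto (fun k => volume ((En (σ k) ∆ E) ∩ C)) atTop (𝓝 0) :=
    fun C hC => (hconv C hC).comp hσmono.tendsto_atTop
  obtain ⟨τ, hτmono, hae⟩ :=
    exists_subseq_indicator_tendsto_ae hE (fun k => En (σ k)) (fun k => hEn _) hconv'
  have hle := perK_le_liminf_of_ae hKm hΩ hE (fun k => En (σ (τ k)))
    (fun k => hEn _) hae
  have hliminf : liminf (fun k => PerK K (En (σ (τ k))) Ω) atTop ≤ c :=
    liminf_le_of_frequently_le' (Frequently.of_forall fun k => (hσ (τ k)).le)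
  exact absurd (hle.trans hliminf) (not_le.mpr hc2)

end
end

section
/- Existence of solutions to the nonlocal Plateau problem: let d ≥ 1, let K : ℝ^d → [0,∞) be a measurable even function, and let Ω ⊆ ℝ^d be open and bounded. Suppose E₀ ⊆ ℝ^d is measurable with Per_K(E₀,Ω) < ∞, and let 𝓕 := { F ⊆ ℝ^d measurable : Per_K(F,Ω) < ∞ and F ∩ Ωᶜ = E₀ ∩ Ωᶜ }. Then there exists E ∈ 𝓕 such that Per_K(E,Ω) ≤ Per_K(F,Ω) for every F ∈ 𝓕. -/
open MeasureTheory Filter Set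
open scoped ENNReal Topology NNReal RealInnerProductSpace symmDiff

noncomputable section

variable {d : ℕ}

namespace PlateauAux

variable {d : ℕ}

/-- `ℝ≥0∞`-valued indicator. -/
def ind (S : Set (V d)) (x : V d) : ℝ≥0∞ := S.indicator 1 x

lemma ind_mem {S : Set (V d)} {x : V d} (h : x ∈ S) : ind S x = 1 := by simp [ind, h]
lemma ind_not_mem {S : Set (V d)} {x : V d} (h : x ∉ S) : ind S x = 0 := by simp [ind, h]
lemma ind_ne_top (S : Set (V d)) (x : V d) : ind S x ≠ ⊤ := by
  by_cases h : x ∈ S <;> simp [ind, h]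
lemma ind_inter (A B : Set (V d)) (x : V d) : ind (A ∩ B) x = ind A x * ind B x := by
  by_cases hA : x ∈ A <;> by_cases hB : x ∈ B <;> simp [ind, Set.indicator_apply, hA, hB]
lemma ind_congr {A B : Set (V d)} {x : V d} (h : x ∈ A ↔ x ∈ B) : ind A x = ind B x := by
  by_cases hA : x ∈ A
  · simp [ind, hA, h.mp hA]
  · have hB : x ∉ B := fun hb => hA (h.mpr hb)
    simp [ind, hA, hB]

lemma measurable_ind {S : Set (V d)} (hS : MeasurableSet S) : Measurable (ind S) :=
  measurable_const.indicator hS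

/-- One piece of the perimeter integrand. -/
def pc (K : V d → ℝ) (W₁ W₂ S : Set (V d)) (x y : V d) : ℝ≥0∞ :=
  ind S y * ind Sᶜ x * (ind W₁ x * ind W₂ y * ENNReal.ofReal (K (y - x)))

/-- The full perimeter integrand. -/
def cf (K : V d → ℝ) (Ω E : Set (V d)) (x y : V d) : ℝ≥0∞ :=
  pc K Ω Ω E x y + pc K Ωᶜ Ω E x y + pc K Ω Ωᶜ E x y

/-- Perimeter as a single double integral. -/
def Q (K : V d → ℝ) (Ω E : Set (V d)) : ℝ≥0∞ := ∫⁻ x, ∫⁻ y, cf K Ω E x y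

lemma measurable_pc {K : V d → ℝ} (hK : Measurable K) {W₁ W₂ S : Set (V d)}
    (h1 : MeasurableSet W₁) (h2 : MeasurableSet W₂) (hS : MeasurableSet S) :
    Measurable fun p : V d × V d => pc K W₁ W₂ S p.1 p.2 :=
  ((((measurable_ind hS).comp measurable_snd).mul
      ((measurable_ind hS.compl).comp measurable_fst)).mul
    ((((measurable_ind h1).comp measurable_fst).mul
        ((measurable_ind h2).comp measurable_snd)).mul
      (ENNReal.measurable_ofReal.comp (hK.comp (measurable_snd.sub measurable_fst)))))

lemma measurable_cf {K : V d → ℝ} (hK : Measurable K) {Ω E : Set (V d)}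
    (hΩ : MeasurableSet Ω) (hE : MeasurableSet E) :
    Measurable fun p : V d × V d => cf K Ω E p.1 p.2 :=
  ((measurable_pc hK hΩ hΩ hE).add (measurable_pc hK hΩ.compl hΩ hE)).add
    (measurable_pc hK hΩ hΩ.compl hE)

lemma measurable_cf_left {K : V d → ℝ} (hK : Measurable K) {Ω E : Set (V d)}
    (hΩ : MeasurableSet Ω) (hE : MeasurableSet E) (x : V d) :
    Measurable fun y => cf K Ω E x y :=
  (measurable_cf hK hΩ hE).comp measurable_prodMk_left

lemma measurable_cf_lint {K : V d → ℝ} (hK : Measurable K) {Ω E : Set (V d)}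
    (hΩ : MeasurableSet Ω) (hE : MeasurableSet E) :
    Measurable fun x => ∫⁻ y, cf K Ω E x y :=
  Measurable.lintegral_prod_right (measurable_cf hK hΩ hE)

lemma measurable_pc_left {K : V d → ℝ} (hK : Measurable K) {W₁ W₂ S : Set (V d)}
    (h1 : MeasurableSet W₁) (h2 : MeasurableSet W₂) (hS : MeasurableSet S) (x : V d) :
    Measurable fun y => pc K W₁ W₂ S x y :=
  (measurable_pc hK h1 h2 hS).comp measurable_prodMk_left

lemma measurable_pc_lint {K : V d → ℝ} (hK : Measurable K) {W₁ W₂ S : Set (V d)}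
    (h1 : MeasurableSet W₁) (h2 : MeasurableSet W₂) (hS : MeasurableSet S) :
    Measurable fun x => ∫⁻ y, pc K W₁ W₂ S x y :=
  Measurable.lintegral_prod_right (measurable_pc hK h1 h2 hS)

lemma LKr_eq {K : V d → ℝ} {A B : Set (V d)} (hA : MeasurableSet A) (hB : MeasurableSet B) :
    LKr K A B = ∫⁻ x, ∫⁻ y, ind A y * ind B x * ENNReal.ofReal (K (y - x)) := by
  rw [LKr, ← lintegral_indicator hB]
  refine lintegral_congr fun x => ?_
  by_cases hx : x ∈ B
  · rw [Set.indicator_of_mem hx, ← lintegral_indicator hA]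
    refine lintegral_congr fun y => ?_
    by_cases hy : y ∈ A <;>
      simp [Set.indicator_apply, hy, ind_mem, ind_not_mem, hx]
  · simp [Set.indicator_of_notMem hx, ind_not_mem hx]

lemma PerKr_eq_Q {K : V d → ℝ} (hK : Measurable K) {Ω E : Set (V d)}
    (hΩ : MeasurableSet Ω) (hE : MeasurableSet E) :
    PerKr K E Ω = Q K Ω E := by
  rw [PerKr, LKr_eq (hE.inter hΩ) (hE.compl.inter hΩ),
      LKr_eq (hE.inter hΩ) (hE.compl.inter hΩ.compl),
      LKr_eq (hE.inter hΩ.compl) (hE.compl.inter hΩ)]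
  have e1 : (∫⁻ x, ∫⁻ y, ind (E ∩ Ω) y * ind (Eᶜ ∩ Ω) x * ENNReal.ofReal (K (y - x)))
      = ∫⁻ x, ∫⁻ y, pc K Ω Ω E x y :=
    lintegral_congr fun x => lintegral_congr fun y => by
      simp only [ind_inter, pc]; ring
  have e2 : (∫⁻ x, ∫⁻ y, ind (E ∩ Ω) y * ind (Eᶜ ∩ Ωᶜ) x * ENNReal.ofReal (K (y - x)))
      = ∫⁻ x, ∫⁻ y, pc K Ωᶜ Ω E x y :=
    lintegral_congr fun x => lintegral_congr fun y => by
      simp only [ind_inter, pc]; ring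
  have e3 : (∫⁻ x, ∫⁻ y, ind (E ∩ Ωᶜ) y * ind (Eᶜ ∩ Ω) x * ENNReal.ofReal (K (y - x)))
      = ∫⁻ x, ∫⁻ y, pc K Ω Ωᶜ E x y :=
    lintegral_congr fun x => lintegral_congr fun y => by
      simp only [ind_inter, pc]; ring
  rw [e1, e2, e3, Q]
  have inner : ∀ x, (∫⁻ y, cf K Ω E x y)
      = (∫⁻ y, pc K Ω Ω E x y) + (∫⁻ y, pc K Ωᶜ Ω E x y) + (∫⁻ y, pc K Ω Ωᶜ E x y) := by
    intro x
    rw [show (fun y => cf K Ω E x y)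
        = fun y => (pc K Ω Ω E x y + pc K Ωᶜ Ω E x y) + pc K Ω Ωᶜ E x y from rfl,
      lintegral_add_left (f := fun y => pc K Ω Ω E x y + pc K Ωᶜ Ω E x y)
        ((measurable_pc_left hK hΩ hΩ hE x).add
        (measurable_pc_left hK hΩ.compl hΩ hE x)),
      lintegral_add_left (measurable_pc_left hK hΩ hΩ hE x)]
  rw [lintegral_congr inner,
    lintegral_add_left (f := fun x => (∫⁻ y, pc K Ω Ω E x y) + ∫⁻ y, pc K Ωᶜ Ω E x y)
      ((measurable_pc_lint hK hΩ hΩ hE).add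
      (measurable_pc_lint hK hΩ.compl hΩ hE)),
    lintegral_add_left (measurable_pc_lint hK hΩ hΩ hE)]

lemma cut_ineq (E F : Set (V d)) (x y : V d) (c : ℝ≥0∞) :
    ind (E ∩ F) y * ind (E ∩ F)ᶜ x * c + ind (E ∪ F) y * ind (E ∪ F)ᶜ x * c ≤
      ind E y * ind Eᶜ x * c + ind F y * ind Fᶜ x * c := by
  rw [← add_mul, ← add_mul]
  refine mul_le_mul_left ?_ c
  by_cases h1 : y ∈ E <;> by_cases h2 : y ∈ F <;> by_cases h3 : x ∈ E <;> by_cases h4 : x ∈ F <;>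
    simp [ind, Set.indicator_apply, h1, h2, h3, h4]

lemma cf_submod (K : V d → ℝ) (Ω E F : Set (V d)) (x y : V d) :
    cf K Ω (E ∩ F) x y + cf K Ω (E ∪ F) x y ≤ cf K Ω E x y + cf K Ω F x y := by
  have h1 := cut_ineq E F x y (ind Ω x * ind Ω y * ENNReal.ofReal (K (y - x)))
  have h2 := cut_ineq E F x y (ind Ωᶜ x * ind Ω y * ENNReal.ofReal (K (y - x)))
  have h3 := cut_ineq E F x y (ind Ω x * ind Ωᶜ y * ENNReal.ofReal (K (y - x)))
  simp only [cf, pc]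
  refine le_trans (le_of_eq ?_) (le_trans (add_le_add h1 (add_le_add h2 h3)) (le_of_eq ?_)) <;>
    ring

lemma Q_submod {K : V d → ℝ} (hK : Measurable K) {Ω E F : Set (V d)}
    (hΩ : MeasurableSet Ω) (hE : MeasurableSet E) (hF : MeasurableSet F) :
    Q K Ω (E ∩ F) + Q K Ω (E ∪ F) ≤ Q K Ω E + Q K Ω F := by
  rw [Q, Q, Q, Q, ← lintegral_add_left (measurable_cf_lint hK hΩ (hE.inter hF)),
    ← lintegral_add_left (measurable_cf_lint hK hΩ hE)]
  refine lintegral_mono fun x => ?_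
  rw [← lintegral_add_left (measurable_cf_left hK hΩ (hE.inter hF) x),
    ← lintegral_add_left (measurable_cf_left hK hΩ hE x)]
  exact lintegral_mono fun y => cf_submod K Ω E F x y

lemma cf_congr {K : V d → ℝ} {Ω E E' : Set (V d)} {x y : V d}
    (hx : x ∈ E ↔ x ∈ E') (hy : y ∈ E ↔ y ∈ E') :
    cf K Ω E x y = cf K Ω E' x y := by
  have h1 : ind E y = ind E' y := ind_congr hy
  have h2 : ind Eᶜ x = ind E'ᶜ x := ind_congr (not_congr hx)
  simp only [cf, pc, h1, h2]

lemma Q_fatou {K : V d → ℝ} (hK : Measurable K) {Ω : Set (V d)} (hΩ : MeasurableSet Ω)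
    {E : ℕ → Set (V d)} {A : Set (V d)} (hE : ∀ n, MeasurableSet (E n))
    (hconv : ∀ x, ∃ N, ∀ n ≥ N, (x ∈ E n ↔ x ∈ A)) :
    Q K Ω A ≤ liminf (fun n => Q K Ω (E n)) atTop := by
  have key : ∀ x y, cf K Ω A x y = liminf (fun n => cf K Ω (E n) x y) atTop := by
    intro x y
    obtain ⟨Nx, hNx⟩ := hconv x
    obtain ⟨Ny, hNy⟩ := hconv y
    have hev : ∀ n ≥ max Nx Ny, cf K Ω (E n) x y = cf K Ω A x y := fun n hn =>
      cf_congr (hNx n (le_trans (le_max_left _ _) hn)) (hNy n (le_trans (le_max_right _ _) hn))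
    rw [liminf_congr (eventually_atTop.mpr ⟨max Nx Ny, hev⟩), liminf_const]
  calc Q K Ω A = ∫⁻ x, ∫⁻ y, liminf (fun n => cf K Ω (E n) x y) atTop :=
        lintegral_congr fun x => lintegral_congr fun y => key x y
    _ ≤ ∫⁻ x, liminf (fun n => ∫⁻ y, cf K Ω (E n) x y) atTop :=
        lintegral_mono fun x => lintegral_liminf_le fun n => measurable_cf_left hK hΩ (hE n) x
    _ ≤ liminf (fun n => Q K Ω (E n)) atTop :=
        lintegral_liminf_le fun n => measurable_cf_lint hK hΩ (hE n)

/-- Finite intersections of a tail of a sequence of sets. -/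
def GG (F : ℕ → Set (V d)) (n : ℕ) : ℕ → Set (V d)
  | 0 => F n
  | j + 1 => GG F n j ∩ F (n + j + 1)

lemma mem_GG (F : ℕ → Set (V d)) (n : ℕ) : ∀ j (x : V d),
    x ∈ GG F n j ↔ ∀ i ≤ j, x ∈ F (n + i) := by
  intro j
  induction j with
  | zero => intro x; simp [GG, Nat.le_zero]
  | succ j ih =>
    intro x
    constructor
    · rintro ⟨hx, hx'⟩ i hi
      rcases Nat.le_succ_iff.mp hi with hi | rfl
      · exact (ih x).mp hx i hi
      · simpa [← Nat.add_assoc] using hx'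
    · intro h
      exact ⟨(ih x).mpr fun i hi => h i (hi.trans (Nat.le_succ _)),
        by simpa [← Nat.add_assoc] using h (j + 1) le_rfl⟩

lemma measurable_GG {F : ℕ → Set (V d)} (hF : ∀ n, MeasurableSet (F n)) (n : ℕ) :
    ∀ j, MeasurableSet (GG F n j)
  | 0 => hF n
  | j + 1 => (measurable_GG hF n j).inter (hF (n + j + 1))

end PlateauAux

/-- existence of solutions to the nonlocal Plateau problem. -/
theorem plateau_existence {d : ℕ} (hd : 1 ≤ d)
    (K : V d → ℝ) (hKm : Measurable K) (hK0 : ∀ h, 0 ≤ K h) (hKe : ∀ h, K (-h) = K h)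
    (Ω : Set (V d)) (hΩo : IsOpen Ω) (hΩb : Bornology.IsBounded Ω)
    (E₀ : Set (V d)) (hE₀ : MeasurableSet E₀) (hE₀fin : PerKr K E₀ Ω < ⊤) :
    ∃ E : Set (V d), MeasurableSet E ∧ PerKr K E Ω < ⊤ ∧ E ∩ Ωᶜ = E₀ ∩ Ωᶜ ∧
      ∀ F : Set (V d), MeasurableSet F → PerKr K F Ω < ⊤ → F ∩ Ωᶜ = E₀ ∩ Ωᶜ →
        PerKr K E Ω ≤ PerKr K F Ω := by
  classical
  have hΩm : MeasurableSet Ω := hΩo.measurableSet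
  set 𝓐 : Set (Set (V d)) := {F | MeasurableSet F ∧ PerKr K F Ω < ⊤ ∧ F ∩ Ωᶜ = E₀ ∩ Ωᶜ}
    with h𝓐
  set m : ℝ≥0∞ := ⨅ F ∈ 𝓐, PerKr K F Ω with hmdef
  have hE₀A : E₀ ∈ 𝓐 := ⟨hE₀, hE₀fin, rfl⟩
  have hmle : ∀ F ∈ 𝓐, m ≤ PerKr K F Ω := fun F hF => iInf₂_le F hF
  have hm_top : m < ⊤ := lt_of_le_of_lt (hmle E₀ hE₀A) hE₀fin
  have hPQ : ∀ {S : Set (V d)}, MeasurableSet S → PerKr K S Ω = PlateauAux.Q K Ω S :=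
    fun hS => PlateauAux.PerKr_eq_Q hKm hΩm hS
  -- choose a minimizing sequence
  have hex : ∀ n : ℕ, ∃ G, G ∈ 𝓐 ∧ PerKr K G Ω ≤ m + (2⁻¹ : ℝ≥0∞) ^ n := by
    intro n
    have hlt : m < m + (2⁻¹ : ℝ≥0∞) ^ n :=
      ENNReal.lt_add_right hm_top.ne (pow_ne_zero n (by norm_num))
    by_contra h
    push_neg at h
    exact hlt.not_ge (le_iInf₂ fun G hG => (h G hG).le)
  choose F hFA hFle using hex
  have hFm : ∀ n, MeasurableSet (F n) := fun n => (hFA n).1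
  -- geometric sum bound
  have hgeo : ∀ n j : ℕ, (∑ i ∈ Finset.range (j + 1), (2⁻¹ : ℝ≥0∞) ^ (n + i))
      ≤ (2⁻¹ : ℝ≥0∞) ^ n * 2 := by
    intro n j
    calc (∑ i ∈ Finset.range (j + 1), (2⁻¹ : ℝ≥0∞) ^ (n + i))
        = (2⁻¹ : ℝ≥0∞) ^ n * ∑ i ∈ Finset.range (j + 1), (2⁻¹ : ℝ≥0∞) ^ i := by
          rw [Finset.mul_sum]; exact Finset.sum_congr rfl fun i _ => pow_add _ _ _
      _ ≤ (2⁻¹ : ℝ≥0∞) ^ n * ∑' i : ℕ, (2⁻¹ : ℝ≥0∞) ^ i :=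
          mul_le_mul_right (ENNReal.sum_le_tsum _) _
      _ = (2⁻¹ : ℝ≥0∞) ^ n * 2 := by
          rw [ENNReal.tsum_geometric, ENNReal.one_sub_inv_two, inv_inv]
  have hpowtop : ∀ n : ℕ, m + (2⁻¹ : ℝ≥0∞) ^ n * 2 < ⊤ := by
    intro n
    refine ENNReal.add_lt_top.mpr ⟨hm_top, ENNReal.mul_lt_top ?_ ?_⟩
    · exact ENNReal.pow_lt_top (by norm_num)
    · norm_num
  -- induction: finite intersections stay admissible with controlled energy
  have key : ∀ n j, PlateauAux.GG F n j ∈ 𝓐 ∧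
      PerKr K (PlateauAux.GG F n j) Ω
        ≤ m + ∑ i ∈ Finset.range (j + 1), (2⁻¹ : ℝ≥0∞) ^ (n + i) := by
    intro n j
    induction j with
    | zero =>
      refine ⟨hFA n, ?_⟩
      simpa [PlateauAux.GG] using hFle n
    | succ j ih =>
      obtain ⟨⟨hAm, hAfin, hAbd⟩, hAle⟩ := ih
      obtain ⟨hFm', hFfin', hFbd'⟩ := hFA (n + j + 1)
      set A := PlateauAux.GG F n j with hAdef
      set F' := F (n + j + 1) with hF'def
      have hsub : PerKr K (A ∩ F') Ω + PerKr K (A ∪ F') Ω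
          ≤ PerKr K A Ω + PerKr K F' Ω := by
        rw [hPQ hAm, hPQ hFm', hPQ (hAm.inter hFm'), hPQ (hAm.union hFm')]
        exact PlateauAux.Q_submod hKm hΩm hAm hFm'
      have hUbd : (A ∪ F') ∩ Ωᶜ = E₀ ∩ Ωᶜ := by
        rw [Set.union_inter_distrib_right, hAbd, hFbd', Set.union_self]
      have hUfin : PerKr K (A ∪ F') Ω < ⊤ :=
        lt_of_le_of_lt (le_trans le_add_self hsub) (ENNReal.add_lt_top.mpr ⟨hAfin, hFfin'⟩)
      have hU𝓐 : A ∪ F' ∈ 𝓐 := ⟨hAm.union hFm', hUfin, hUbd⟩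
      have hchain : m + PerKr K (A ∩ F') Ω
          ≤ m + (m + ((∑ i ∈ Finset.range (j + 1), (2⁻¹ : ℝ≥0∞) ^ (n + i))
              + (2⁻¹ : ℝ≥0∞) ^ (n + (j + 1)))) := by
        calc m + PerKr K (A ∩ F') Ω = PerKr K (A ∩ F') Ω + m := add_comm _ _
          _ ≤ PerKr K (A ∩ F') Ω + PerKr K (A ∪ F') Ω := add_le_add_right (hmle _ hU𝓐) _
          _ ≤ PerKr K A Ω + PerKr K F' Ω := hsub
          _ ≤ (m + ∑ i ∈ Finset.range (j + 1), (2⁻¹ : ℝ≥0∞) ^ (n + i))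
              + (m + (2⁻¹ : ℝ≥0∞) ^ (n + (j + 1))) := add_le_add hAle (hFle (n + j + 1))
          _ = m + (m + ((∑ i ∈ Finset.range (j + 1), (2⁻¹ : ℝ≥0∞) ^ (n + i))
              + (2⁻¹ : ℝ≥0∞) ^ (n + (j + 1)))) := by ring
      have hIle : PerKr K (A ∩ F') Ω
          ≤ m + ((∑ i ∈ Finset.range (j + 1), (2⁻¹ : ℝ≥0∞) ^ (n + i))
              + (2⁻¹ : ℝ≥0∞) ^ (n + (j + 1))) :=
        (ENNReal.add_le_add_iff_left hm_top.ne).mp hchain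
      have hbd : PerKr K (A ∩ F') Ω
          ≤ m + ∑ i ∈ Finset.range (j + 2), (2⁻¹ : ℝ≥0∞) ^ (n + i) := by
        rwa [Finset.sum_range_succ]
      have hIbd : (A ∩ F') ∩ Ωᶜ = E₀ ∩ Ωᶜ := by
        have hre : (A ∩ F') ∩ Ωᶜ = (A ∩ Ωᶜ) ∩ (F' ∩ Ωᶜ) := by
          ext z; simp only [Set.mem_inter_iff]; tauto
        rw [hre, hAbd, hFbd', Set.inter_self]
      have hIfin : PerKr K (A ∩ F') Ω < ⊤ :=
        lt_of_le_of_lt hbd (lt_of_le_of_lt (add_le_add_right (hgeo n (j + 1)) m) (hpowtop n))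
      exact ⟨⟨hAm.inter hFm', hIfin, hIbd⟩, hbd⟩
  -- tail intersections
  set H : ℕ → Set (V d) := fun n => ⋂ i, F (n + i) with hHdef
  have hHm : ∀ n, MeasurableSet (H n) := fun n => MeasurableSet.iInter fun i => hFm (n + i)
  have hHconv : ∀ n x, ∃ N, ∀ j ≥ N, (x ∈ PlateauAux.GG F n j ↔ x ∈ H n) := by
    intro n x
    by_cases hx : x ∈ H n
    · refine ⟨0, fun j _ => ?_⟩
      have hx' : ∀ i, x ∈ F (n + i) := by
        intro i; exact Set.mem_iInter.mp hx i
      exact iff_of_true ((PlateauAux.mem_GG F n j x).mpr fun i _ => hx' i) hx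
    · have hex' : ∃ i, x ∉ F (n + i) := by
        by_contra h; push_neg at h; exact hx (Set.mem_iInter.mpr h)
      obtain ⟨i₀, hi₀⟩ := hex'
      exact ⟨i₀, fun j hj =>
        iff_of_false (fun hmem => hi₀ ((PlateauAux.mem_GG F n j x).mp hmem i₀ hj)) hx⟩
  have hHfin : ∀ n, PerKr K (H n) Ω ≤ m + (2⁻¹ : ℝ≥0∞) ^ n * 2 := by
    intro n
    rw [hPQ (hHm n)]
    refine le_trans
      (PlateauAux.Q_fatou hKm hΩm (PlateauAux.measurable_GG hFm n) (hHconv n)) ?_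
    have hub : ∀ j, PlateauAux.Q K Ω (PlateauAux.GG F n j) ≤ m + (2⁻¹ : ℝ≥0∞) ^ n * 2 := by
      intro j
      rw [← hPQ (PlateauAux.measurable_GG hFm n j)]
      exact le_trans (key n j).2 (add_le_add_right (hgeo n j) m)
    calc liminf (fun j => PlateauAux.Q K Ω (PlateauAux.GG F n j)) atTop
        ≤ liminf (fun _ : ℕ => m + (2⁻¹ : ℝ≥0∞) ^ n * 2) atTop :=
          liminf_le_liminf (Eventually.of_forall hub)
      _ = m + (2⁻¹ : ℝ≥0∞) ^ n * 2 := liminf_const _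
  have hFbdmem : ∀ k (x : V d), x ∈ Ωᶜ → (x ∈ F k ↔ x ∈ E₀) := by
    intro k x hx
    have h := Set.ext_iff.mp (hFA k).2.2 x
    simp only [Set.mem_inter_iff] at h
    exact ⟨fun hf => (h.mp ⟨hf, hx⟩).1, fun he => (h.mpr ⟨he, hx⟩).1⟩
  have hHbd : ∀ n, H n ∩ Ωᶜ = E₀ ∩ Ωᶜ := by
    intro n
    ext x
    simp only [Set.mem_inter_iff, hHdef, Set.mem_iInter]
    constructor
    · rintro ⟨h1, h2⟩
      exact ⟨(hFbdmem n x h2).mp (by simpa using h1 0), h2⟩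
    · rintro ⟨h1, h2⟩
      exact ⟨fun i => (hFbdmem (n + i) x h2).mpr h1, h2⟩
  have hHmono : ∀ {a b : ℕ}, a ≤ b → H a ⊆ H b := by
    intro a b hab x hx
    simp only [hHdef, Set.mem_iInter] at hx ⊢
    intro i
    have h := hx (b - a + i)
    rwa [show a + (b - a + i) = b + i by omega] at h
  -- the minimizer
  set E : Set (V d) := ⋃ n, H n with hEdef
  have hEm : MeasurableSet E := MeasurableSet.iUnion hHm
  have hEconv : ∀ x, ∃ N, ∀ n ≥ N, (x ∈ H n ↔ x ∈ E) := by
    intro x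
    by_cases hx : x ∈ E
    · obtain ⟨n₀, hn₀⟩ : ∃ n₀, x ∈ H n₀ := by
        simpa [hEdef, Set.mem_iUnion] using hx
      exact ⟨n₀, fun n hn => iff_of_true (hHmono hn hn₀) hx⟩
    · exact ⟨0, fun n _ => iff_of_false (fun h => hx (Set.mem_iUnion.mpr ⟨n, h⟩)) hx⟩
  have hEQ : PerKr K E Ω ≤ m := by
    rw [hPQ hEm]
    refine le_trans (PlateauAux.Q_fatou hKm hΩm hHm hEconv) ?_
    have htend : Tendsto (fun n : ℕ => m + (2⁻¹ : ℝ≥0∞) ^ n * 2) atTop (𝓝 (m + 0 * 2)) :=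
      Tendsto.const_add m (ENNReal.Tendsto.mul_const
        (ENNReal.tendsto_pow_atTop_nhds_zero_of_lt_one (by norm_num))
        (Or.inr (by norm_num)))
    have hlim : liminf (fun n : ℕ => m + (2⁻¹ : ℝ≥0∞) ^ n * 2) atTop = m := by
      have := htend.liminf_eq
      simpa using this
    calc liminf (fun n => PlateauAux.Q K Ω (H n)) atTop
        ≤ liminf (fun n : ℕ => m + (2⁻¹ : ℝ≥0∞) ^ n * 2) atTop :=
          liminf_le_liminf (Eventually.of_forall fun n => by
            rw [← hPQ (hHm n)]; exact hHfin n)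
      _ = m := hlim
  have hEbd : E ∩ Ωᶜ = E₀ ∩ Ωᶜ := by
    rw [hEdef, Set.iUnion_inter]
    ext x
    simp only [Set.mem_iUnion]
    constructor
    · rintro ⟨n, hn⟩
      rw [hHbd n] at hn
      exact hn
    · intro hx
      exact ⟨0, by rw [hHbd 0]; exact hx⟩
  exact ⟨E, hEm, lt_of_le_of_lt hEQ hm_top, hEbd,
    fun G hGm hGfin hGbd => le_trans hEQ (hmle G ⟨hGm, hGfin, hGbd⟩)⟩

end
end

section
/- Optimality conditions for nonlocal minimal surfaces: let d ≥ 1, let K : ℝ^d → [0,∞) be a measurable even function, let Ω ⊆ ℝ^d be open and bounded, and let E be a measurable set with Per_K(E,Ω) < ∞ that minimises Per_K(·,Ω) among all measurable sets F with Per_K(F,Ω) < ∞ and F ∩ Ωᶜ = E ∩ Ωᶜ. Then: (i) L_K(E,F) ≤ L_K(Eᶜ ∩ Fᶜ, F) for every measurable F ⊆ Eᶜ ∩ Ω, and (ii) L_K(Eᶜ,F) ≤ L_K(E ∩ Fᶜ, F) for every measurable F ⊆ E ∩ Ω. -/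
open MeasureTheory Filter Set
open scoped ENNReal Topology NNReal RealInnerProductSpace symmDiff

noncomputable section

variable {d : ℕ}

lemma meas_inner (K : V d → ℝ) (hKm : Measurable K) (A : Set (V d)) :
    Measurable fun x : V d => ∫⁻ y in A, ENNReal.ofReal (K (y - x)) := by
  apply Measurable.lintegral_prod_right (f := fun x y => ENNReal.ofReal (K (y - x)))
  exact (hKm.comp (measurable_snd.sub measurable_fst)).ennreal_ofReal

lemma LKr_union_left (K : V d → ℝ) (hKm : Measurable K) {A₁ A₂ : Set (V d)} (B : Set (V d))
    (hA₂ : MeasurableSet A₂) (hd : Disjoint A₁ A₂) :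
    LKr K (A₁ ∪ A₂) B = LKr K A₁ B + LKr K A₂ B := by
  unfold LKr
  rw [← lintegral_add_left (meas_inner K hKm A₁)]
  exact lintegral_congr fun x => lintegral_union hA₂ hd

lemma LKr_union_right (K : V d → ℝ) (A : Set (V d)) {B₁ B₂ : Set (V d)}
    (hB₂ : MeasurableSet B₂) (hd : Disjoint B₁ B₂) :
    LKr K A (B₁ ∪ B₂) = LKr K A B₁ + LKr K A B₂ :=
  lintegral_union hB₂ hd

lemma LKr_symm (K : V d → ℝ) (hKm : Measurable K) (hKe : ∀ h, K (-h) = K h)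
    (A B : Set (V d)) : LKr K A B = LKr K B A := by
  unfold LKr
  rw [lintegral_lintegral_swap
    ((hKm.comp (measurable_snd.sub measurable_fst)).ennreal_ofReal.aemeasurable)]
  refine lintegral_congr fun y => lintegral_congr fun x => ?_
  rw [← hKe, neg_sub]

lemma PerKr_compl (K : V d → ℝ) (hKm : Measurable K) (hKe : ∀ h, K (-h) = K h)
    (E Ω : Set (V d)) : PerKr K Eᶜ Ω = PerKr K E Ω := by
  unfold PerKr
  rw [compl_compl, LKr_symm K hKm hKe (Eᶜ ∩ Ω) (E ∩ Ω),
    LKr_symm K hKm hKe (Eᶜ ∩ Ω) (E ∩ Ωᶜ), LKr_symm K hKm hKe (Eᶜ ∩ Ωᶜ) (E ∩ Ω)]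
  ring

lemma key_ineq (K : V d → ℝ) (hKm : Measurable K) (hKe : ∀ h, K (-h) = K h)
    (Ω : Set (V d)) (hΩ : MeasurableSet Ω)
    (E : Set (V d)) (hE : MeasurableSet E) (hEfin : PerKr K E Ω < ⊤)
    (hmin : ∀ F : Set (V d), MeasurableSet F → PerKr K F Ω < ⊤ → F ∩ Ωᶜ = E ∩ Ωᶜ →
      PerKr K E Ω ≤ PerKr K F Ω)
    (F : Set (V d)) (hFm : MeasurableSet F) (hF : F ⊆ Eᶜ ∩ Ω) :
    LKr K E F ≤ LKr K (Eᶜ ∩ Fᶜ) F := by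
  have hFE : F ⊆ Eᶜ := fun x hx => (hF hx).1
  have hFΩ : F ⊆ Ω := fun x hx => (hF hx).2
  have s1 : Eᶜ ∩ Ω = Eᶜ ∩ Fᶜ ∩ Ω ∪ F := by
    ext x; have h1 := @hFE x; have h2 := @hFΩ x
    simp only [mem_inter_iff, mem_union, mem_compl_iff] at *; tauto
  have s2 : Eᶜ ∩ Fᶜ = Eᶜ ∩ Fᶜ ∩ Ω ∪ Eᶜ ∩ Ωᶜ := by
    ext x; have h1 := @hFE x; have h2 := @hFΩ x
    simp only [mem_inter_iff, mem_union, mem_compl_iff] at *; tauto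
  have s3 : (E ∪ F) ∩ Ω = E ∩ Ω ∪ F := by
    ext x; have h2 := @hFΩ x
    simp only [mem_inter_iff, mem_union] at *; tauto
  have s4 : (E ∪ F)ᶜ = Eᶜ ∩ Fᶜ := compl_union E F
  have s5 : (E ∪ F) ∩ Ωᶜ = E ∩ Ωᶜ := by
    ext x; have h2 := @hFΩ x
    simp only [mem_inter_iff, mem_union, mem_compl_iff] at *; tauto
  have s6 : Eᶜ ∩ Fᶜ ∩ Ωᶜ = Eᶜ ∩ Ωᶜ := by
    ext x; have h2 := @hFΩ x
    simp only [mem_inter_iff, mem_compl_iff] at *; tauto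
  have s7 : E = E ∩ Ω ∪ E ∩ Ωᶜ := by simp [← inter_union_distrib_left]
  have d1 : Disjoint (Eᶜ ∩ Fᶜ ∩ Ω) F :=
    disjoint_compl_left.mono_left (inter_subset_left.trans inter_subset_right)
  have d2 : Disjoint (Eᶜ ∩ Fᶜ ∩ Ω) (Eᶜ ∩ Ωᶜ) :=
    disjoint_compl_right.mono inter_subset_right inter_subset_right
  have d3 : Disjoint (E ∩ Ω) F :=
    (disjoint_compl_right.mono_right hFE).mono_left inter_subset_left
  have d4 : Disjoint (E ∩ Ω) (E ∩ Ωᶜ) :=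
    disjoint_compl_right.mono inter_subset_right inter_subset_right
  have mEΩc : MeasurableSet (E ∩ Ωᶜ) := hE.inter hΩ.compl
  have mEcΩc : MeasurableSet (Eᶜ ∩ Ωᶜ) := hE.compl.inter hΩ.compl
  have eLEF : LKr K E F = LKr K (E ∩ Ω) F + LKr K (E ∩ Ωᶜ) F := by
    have := LKr_union_left K hKm F mEΩc d4
    rwa [← s7] at this
  have ident : PerKr K (E ∪ F) Ω + LKr K E F = PerKr K E Ω + LKr K F (Eᶜ ∩ Fᶜ) := by
    have eE : PerKr K E Ω =
        LKr K (E ∩ Ω) (Eᶜ ∩ Fᶜ ∩ Ω) + LKr K (E ∩ Ω) F + LKr K (E ∩ Ω) (Eᶜ ∩ Ωᶜ)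
          + (LKr K (E ∩ Ωᶜ) (Eᶜ ∩ Fᶜ ∩ Ω) + LKr K (E ∩ Ωᶜ) F) := by
      rw [PerKr, s1, LKr_union_right K _ hFm d1, LKr_union_right K _ hFm d1]
    have eG : PerKr K (E ∪ F) Ω =
        LKr K (E ∩ Ω) (Eᶜ ∩ Fᶜ ∩ Ω) + LKr K F (Eᶜ ∩ Fᶜ ∩ Ω)
          + (LKr K (E ∩ Ω) (Eᶜ ∩ Ωᶜ) + LKr K F (Eᶜ ∩ Ωᶜ))
          + LKr K (E ∩ Ωᶜ) (Eᶜ ∩ Fᶜ ∩ Ω) := by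
      rw [PerKr, s4, s3, s5, s6, LKr_union_left K hKm _ hFm d3,
        LKr_union_left K hKm _ hFm d3]
    have eLF : LKr K F (Eᶜ ∩ Fᶜ) = LKr K F (Eᶜ ∩ Fᶜ ∩ Ω) + LKr K F (Eᶜ ∩ Ωᶜ) := by
      conv_lhs => rw [s2]
      exact LKr_union_right K F mEcΩc d2
    rw [eE, eG, eLEF, eLF]; ring
  by_cases htop : LKr K (Eᶜ ∩ Fᶜ) F = ⊤
  · exact htop ▸ le_top
  have hsymm : LKr K F (Eᶜ ∩ Fᶜ) = LKr K (Eᶜ ∩ Fᶜ) F := LKr_symm K hKm hKe _ _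
  have hGfin : PerKr K (E ∪ F) Ω < ⊤ := by
    have hle : PerKr K (E ∪ F) Ω ≤ PerKr K E Ω + LKr K (Eᶜ ∩ Fᶜ) F :=
      calc PerKr K (E ∪ F) Ω ≤ PerKr K (E ∪ F) Ω + LKr K E F := le_self_add
        _ = PerKr K E Ω + LKr K F (Eᶜ ∩ Fᶜ) := ident
        _ = PerKr K E Ω + LKr K (Eᶜ ∩ Fᶜ) F := by rw [hsymm]
    exact hle.trans_lt (ENNReal.add_lt_top.mpr ⟨hEfin, lt_top_iff_ne_top.mpr htop⟩)
  have hmin' : PerKr K E Ω ≤ PerKr K (E ∪ F) Ω := hmin _ (hE.union hFm) hGfin s5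
  have hfinal : PerKr K (E ∪ F) Ω + LKr K E F
      ≤ PerKr K (E ∪ F) Ω + LKr K (Eᶜ ∩ Fᶜ) F := by
    rw [ident, hsymm]; exact add_le_add_left hmin' _
  exact (ENNReal.add_le_add_iff_left hGfin.ne).mp hfinal

/-- optimality conditions for nonlocal minimal surfaces. -/
theorem plateau_optimality {d : ℕ} (hd : 1 ≤ d)
    (K : V d → ℝ) (hKm : Measurable K) (hK0 : ∀ h, 0 ≤ K h) (hKe : ∀ h, K (-h) = K h)
    (Ω : Set (V d)) (hΩo : IsOpen Ω) (hΩb : Bornology.IsBounded Ω)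
    (E : Set (V d)) (hE : MeasurableSet E) (hEfin : PerKr K E Ω < ⊤)
    (hmin : ∀ F : Set (V d), MeasurableSet F → PerKr K F Ω < ⊤ → F ∩ Ωᶜ = E ∩ Ωᶜ →
      PerKr K E Ω ≤ PerKr K F Ω) :
    (∀ F : Set (V d), MeasurableSet F → F ⊆ Eᶜ ∩ Ω →
        LKr K E F ≤ LKr K (Eᶜ ∩ Fᶜ) F) ∧
    (∀ F : Set (V d), MeasurableSet F → F ⊆ E ∩ Ω →
        LKr K Eᶜ F ≤ LKr K (E ∩ Fᶜ) F) := by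
  constructor
  · intro F hFm hF
    exact key_ineq K hKm hKe Ω hΩo.measurableSet E hE hEfin hmin F hFm hF
  · intro F hFm hF
    have hEcfin : PerKr K Eᶜ Ω < ⊤ := by rwa [PerKr_compl K hKm hKe]
    have hmin' : ∀ G : Set (V d), MeasurableSet G → PerKr K G Ω < ⊤ → G ∩ Ωᶜ = Eᶜ ∩ Ωᶜ →
        PerKr K Eᶜ Ω ≤ PerKr K G Ω := by
      intro G hGm hGfin hGdata
      have hdata : Gᶜ ∩ Ωᶜ = E ∩ Ωᶜ := by
        ext x; have h := Set.ext_iff.mp hGdata x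
        simp only [mem_inter_iff, mem_compl_iff] at *; tauto
      rw [PerKr_compl K hKm hKe, ← PerKr_compl K hKm hKe G]
      exact hmin Gᶜ hGm.compl (by rwa [PerKr_compl K hKm hKe]) hdata
    have h := key_ineq K hKm hKe Ω hΩo.measurableSet Eᶜ hE.compl hEcfin hmin' F hFm
      (by rwa [compl_compl])
    rwa [compl_compl] at h

end
end

section
/- Vanishing of rescaled interactions at positive distance: let d ≥ 1 and let K : ℝ^d → [0,∞) be a measurable even function with ∫_{ℝ^d} K(h)|h| dh < ∞. Let E, F ⊆ ℝ^d be measurable with |E| < ∞ and dist(E,F) > 0. Then lim_{ε→0⁺} (1/ε)·L_ε(E,F) = 0, where L_ε := L_{K_ε} and K_ε(h) := ε^{−d} K(h/ε). -/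
open MeasureTheory Filter Set
open scoped ENNReal Topology NNReal RealInnerProductSpace symmDiff

noncomputable section

variable {d : ℕ}

lemma aux_lintegral_scale {d : ℕ} (f : V d → ℝ≥0∞) (hf : Measurable f) {ε : ℝ} (hε : 0 < ε) :
    ∫⁻ z, f (ε • z) = ENNReal.ofReal ((ε ^ d)⁻¹) * ∫⁻ h, f h := by
  have h1 : (volume : Measure (V d)).map (ε • ·) = ENNReal.ofReal ((ε ^ d)⁻¹) • volume := by
    rw [Measure.map_addHaar_smul volume (ne_of_gt hε)]
    congr 2
    rw [finrank_euclideanSpace_fin, abs_of_nonneg (by positivity)]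
  calc ∫⁻ z, f (ε • z) = ∫⁻ y, f y ∂((volume : Measure (V d)).map (ε • ·)) :=
        (lintegral_map hf (measurable_const_smul ε)).symm
    _ = ENNReal.ofReal ((ε ^ d)⁻¹) * ∫⁻ h, f h := by rw [h1]; simp [lintegral_smul_measure]

/-- main bound for fixed ε -/

lemma aux_tail_tendsto {d : ℕ} (K : V d → ℝ) (hK0 : ∀ h, 0 ≤ K h)
    (hKi : Integrable (fun h : V d => K h * ‖h‖)) :
    Tendsto (fun R : ℝ => ∫⁻ z in {z : V d | R ≤ ‖z‖}, ENNReal.ofReal (K z * ‖z‖))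
      atTop (𝓝 0) := by
  set ν : Measure (V d) := volume.withDensity (fun z => ENNReal.ofReal (K z * ‖z‖)) with hν
  have hSm : ∀ R : ℝ, MeasurableSet {z : V d | R ≤ ‖z‖} := fun R =>
    (isClosed_le continuous_const continuous_norm).measurableSet
  have hTr : ∀ R : ℝ, (∫⁻ z in {z : V d | R ≤ ‖z‖}, ENNReal.ofReal (K z * ‖z‖))
      = ν {z : V d | R ≤ ‖z‖} := fun R => (withDensity_apply _ (hSm R)).symm
  have hfin : ν univ ≠ ∞ := by
    rw [hν, withDensity_apply _ MeasurableSet.univ, Measure.restrict_univ]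
    refine ne_of_lt (lt_of_le_of_lt (lintegral_mono fun z => ?_) hKi.hasFiniteIntegral)
    exact ENNReal.ofReal_le_ofReal (le_abs_self _) |>.trans
      (by rw [← Real.norm_eq_abs, ofReal_norm])
  have hanti : Antitone (fun R : ℝ => {z : V d | R ≤ ‖z‖}) := fun R R' h z hz =>
    le_trans h hz
  have hempty : ⋂ R : ℝ, {z : V d | R ≤ ‖z‖} = (∅ : Set (V d)) := by
    ext z
    simp only [mem_iInter, mem_setOf_eq, mem_empty_iff_false, iff_false, not_forall, not_le]
    exact ⟨‖z‖ + 1, by linarith⟩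
  have := tendsto_measure_iInter_atTop (μ := ν)
    (fun R => (hSm R).nullMeasurableSet) hanti ⟨0, ne_of_lt (lt_of_le_of_lt (measure_mono (subset_univ _)) hfin.lt_top)⟩
  rw [hempty, measure_empty] at this
  simpa only [Function.comp_def, hTr] using this

lemma aux_bound {d : ℕ} (K : V d → ℝ) (hKm : Measurable K) (hK0 : ∀ h, 0 ≤ K h)
    (E F : Set (V d)) (hE : MeasurableSet E) (hF : MeasurableSet F)
    {δ : ℝ} (hδ : 0 < δ) (hδd : ∀ x ∈ E, ∀ y ∈ F, δ ≤ dist x y)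
    {ε : ℝ} (hε : 0 < ε) :
    ENNReal.ofReal ε⁻¹ * LKr (Keps K ε) E F ≤
      volume E * (ENNReal.ofReal δ⁻¹ *
        ∫⁻ z in {z : V d | δ / ε ≤ ‖z‖}, ENNReal.ofReal (K z * ‖z‖)) := by
  set S : Set (V d) := {h : V d | δ ≤ ‖h‖} with hSdef
  set S2 : Set (V d) := {z : V d | δ / ε ≤ ‖z‖} with hS2def
  have hS2m : MeasurableSet S2 := (isClosed_le continuous_const continuous_norm).measurableSet
  have hSm : MeasurableSet S := (isClosed_le continuous_const continuous_norm).measurableSet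
  set g : V d → ℝ≥0∞ := S.indicator (fun h => ENNReal.ofReal (ε⁻¹ * Keps K ε h)) with hgdef
  have hKepsm : Measurable fun h : V d => ε⁻¹ * Keps K ε h := by
    unfold Keps
    exact (((hKm.comp (measurable_const_smul ε⁻¹)).const_mul _).const_mul _)
  have hgm : Measurable g := (ENNReal.measurable_ofReal.comp hKepsm).indicator hSm
  have step1 : ENNReal.ofReal ε⁻¹ * LKr (Keps K ε) E F ≤ ∫⁻ x in F, ∫⁻ y in E, g (y - x) := by
    rw [LKr, ← lintegral_const_mul' _ _ ENNReal.ofReal_ne_top]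
    refine setLIntegral_mono' hF fun x hx => ?_
    rw [← lintegral_const_mul' _ _ ENNReal.ofReal_ne_top]
    refine setLIntegral_mono' hE fun y hy => ?_
    have hmem : y - x ∈ S := by
      have := hδd y hy x hx
      rw [dist_eq_norm] at this
      simpa [hSdef, mem_setOf_eq] using this
    rw [hgdef, indicator_of_mem hmem, ← ENNReal.ofReal_mul (by positivity)]
  have step2 : ∫⁻ x in F, ∫⁻ y in E, g (y - x) = ∫⁻ y in E, ∫⁻ x in F, g (y - x) :=
    lintegral_lintegral_swap ((hgm.comp (measurable_snd.sub measurable_fst)).aemeasurable)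
  have step3 : ∀ y : V d, ∫⁻ x in F, g (y - x) ≤ ∫⁻ h, g h := fun y => by
    refine (setLIntegral_le_lintegral F _).trans (le_of_eq ?_)
    exact (Measure.measurePreserving_sub_left volume y).lintegral_comp hgm
  have step4 : ∫⁻ h, g h ≤ ENNReal.ofReal δ⁻¹ *
      ∫⁻ z in S2, ENNReal.ofReal (K z * ‖z‖) := by
    -- first bound g by indicator with the extra |h| factor
    have hb : ∫⁻ h, g h ≤ ENNReal.ofReal δ⁻¹ *
        ∫⁻ h, S.indicator (fun h => ENNReal.ofReal (ε⁻¹ * Keps K ε h * ‖h‖)) h := by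
      rw [← lintegral_const_mul' _ _ ENNReal.ofReal_ne_top]
      refine lintegral_mono fun h => ?_
      by_cases hmem : h ∈ S
      · rw [hgdef, indicator_of_mem hmem, indicator_of_mem hmem,
          ← ENNReal.ofReal_mul (by positivity)]
        refine ENNReal.ofReal_le_ofReal ?_
        have h1 : (1:ℝ) ≤ δ⁻¹ * ‖h‖ := by
          have h2 : δ⁻¹ * δ ≤ δ⁻¹ * ‖h‖ :=
            mul_le_mul_of_nonneg_left hmem (inv_nonneg.mpr hδ.le)
          rwa [inv_mul_cancel₀ hδ.ne'] at h2
        have hnn : 0 ≤ ε⁻¹ * Keps K ε h := by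
          have := hK0 (ε⁻¹ • h); unfold Keps; positivity
        calc ε⁻¹ * Keps K ε h = ε⁻¹ * Keps K ε h * 1 := by ring
          _ ≤ ε⁻¹ * Keps K ε h * (δ⁻¹ * ‖h‖) := by exact mul_le_mul_of_nonneg_left h1 hnn
          _ = δ⁻¹ * (ε⁻¹ * Keps K ε h * ‖h‖) := by ring
      · rw [hgdef, indicator_of_notMem hmem, indicator_of_notMem hmem]; simp
    refine hb.trans (le_of_eq ?_)
    congr 1
    -- change of variables h = ε • z
    set G : V d → ℝ≥0∞ := S.indicator (fun h => ENNReal.ofReal (ε⁻¹ * Keps K ε h * ‖h‖))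
      with hGdef
    have hGm : Measurable G :=
      ((ENNReal.measurable_ofReal.comp (hKepsm.mul measurable_norm))).indicator hSm
    have hcomp : ∀ z : V d, G (ε • z) =
        S2.indicator
          (fun z => ENNReal.ofReal ((ε ^ d)⁻¹ * (K z * ‖z‖))) z := by
      intro z
      have hnorm : ‖ε • z‖ = ε * ‖z‖ := by
        rw [norm_smul, Real.norm_eq_abs, abs_of_pos hε]
      have hmem_iff : ε • z ∈ S ↔ z ∈ S2 := by
        rw [hSdef, hS2def, mem_setOf_eq, mem_setOf_eq, hnorm, div_le_iff₀ hε, mul_comm]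
      have hval : ε⁻¹ * Keps K ε (ε • z) * ‖ε • z‖ = (ε ^ d)⁻¹ * (K z * ‖z‖) := by
        unfold Keps
        rw [smul_smul, inv_mul_cancel₀ (ne_of_gt hε), one_smul, hnorm]
        field_simp
      by_cases hz : z ∈ S2
      · rw [hGdef, indicator_of_mem (hmem_iff.mpr hz), indicator_of_mem hz, hval]
      · rw [hGdef, indicator_of_notMem (fun hc => hz (hmem_iff.mp hc)),
          indicator_of_notMem hz]
    have hscale := aux_lintegral_scale G hGm hε
    rw [funext hcomp] at hscale
    have hepsd : (0:ℝ) < ε ^ d := by positivity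
    have : ∫⁻ z, S2.indicator
        (fun z => ENNReal.ofReal ((ε ^ d)⁻¹ * (K z * ‖z‖))) z
        = ENNReal.ofReal ((ε ^ d)⁻¹) * ∫⁻ z in S2,
            ENNReal.ofReal (K z * ‖z‖) := by
      rw [lintegral_indicator hS2m,
        ← lintegral_const_mul' _ _ ENNReal.ofReal_ne_top]
      congr 1; funext z
      rw [← ENNReal.ofReal_mul (by positivity)]
    rw [this] at hscale
    have hcancel : ENNReal.ofReal ((ε ^ d)⁻¹) ≠ 0 ∧ ENNReal.ofReal ((ε ^ d)⁻¹) ≠ ⊤ :=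
      ⟨by simp [ENNReal.ofReal_eq_zero, not_le, inv_pos, hepsd], ENNReal.ofReal_ne_top⟩
    exact (ENNReal.mul_right_inj hcancel.1 hcancel.2).mp hscale.symm
  calc ENNReal.ofReal ε⁻¹ * LKr (Keps K ε) E F
      ≤ ∫⁻ x in F, ∫⁻ y in E, g (y - x) := step1
    _ = ∫⁻ y in E, ∫⁻ x in F, g (y - x) := step2
    _ ≤ ∫⁻ y in E, ∫⁻ h, g h := setLIntegral_mono' hE fun y _ => step3 y
    _ = (∫⁻ h, g h) * volume E := by rw [setLIntegral_const]
    _ ≤ (ENNReal.ofReal δ⁻¹ *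
        ∫⁻ z in S2, ENNReal.ofReal (K z * ‖z‖)) * volume E := by
        exact mul_le_mul_left step4 _
    _ = volume E * _ := mul_comm _ _

/-- rescaled interactions of sets at positive distance vanish. -/
theorem tendsto_rescaled_interaction_zero {d : ℕ} (hd : 1 ≤ d)
    (K : V d → ℝ) (hKm : Measurable K) (hK0 : ∀ h, 0 ≤ K h) (hKe : ∀ h, K (-h) = K h)
    (hKi : Integrable (fun h : V d => K h * ‖h‖))
    (E F : Set (V d)) (hE : MeasurableSet E) (hF : MeasurableSet F)
    (hEfin : volume E < ⊤)
    (hdist : ∃ δ > (0 : ℝ), ∀ x ∈ E, ∀ y ∈ F, δ ≤ dist x y) :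
    Tendsto (fun ε : ℝ => ENNReal.ofReal ε⁻¹ * LKr (Keps K ε) E F)
      (𝓝[>] (0 : ℝ)) (𝓝 0) := by
  obtain ⟨δ, hδ, hδd⟩ := hdist
  have htail := aux_tail_tendsto K hK0 hKi
  have hcomp : Tendsto (fun ε : ℝ => δ / ε) (𝓝[>] (0:ℝ)) atTop := by
    simpa [div_eq_mul_inv] using (tendsto_inv_nhdsGT_zero (𝕜 := ℝ)).const_mul_atTop hδ
  have hRHS : Tendsto (fun ε : ℝ => volume E * (ENNReal.ofReal δ⁻¹ *
      ∫⁻ z in {z : V d | δ / ε ≤ ‖z‖}, ENNReal.ofReal (K z * ‖z‖))) (𝓝[>] (0:ℝ)) (𝓝 0) := by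
    have h1 := htail.comp hcomp
    have h2 := ENNReal.Tendsto.const_mul (a := ENNReal.ofReal δ⁻¹) h1 (Or.inr ENNReal.ofReal_ne_top)
    rw [mul_zero] at h2
    have h3 := ENNReal.Tendsto.const_mul (a := volume E) h2 (Or.inr hEfin.ne)
    rw [mul_zero] at h3
    exact h3
  refine tendsto_of_tendsto_of_tendsto_of_le_of_le' tendsto_const_nhds hRHS ?_ ?_
  · exact Eventually.of_forall fun ε => zero_le
  · filter_upwards [self_mem_nhdsWithin] with ε hε
    exact aux_bound K hKm hK0 E F hE hF hδ hδd hε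


end
end
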